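/- arXiv:2003.12922 — 5 statements merged into one kernel-verified Lean document; each statement's English description precedes it below -/
import Mathlib

section
/- Let G be a finite simple graph with maximum degree Δ(G) ≥ 4. Then pn(E_c(G)) ≥ ⌈Δ(G)/2⌉, where E_c(G) is the complete expansion graph of G and pn denotes the pagenumber. -/
open SimpleGraph

/-- The vertex type of the complete expansion graph of `G`: incidence pairs `(v, e)`
with `e` an edge of `G` and `v` an endpoint of `e`. -/
abbrev IncidencePair {V : Type*} (G : SimpleGraph V) : Type _ :=
  {p : V × Sym2 V // p.2 ∈ G.edgeSet ∧ p.1 ∈ p.2}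

/-- The complete expansion graph `E_c(G)` of a simple graph `G`: vertices are the incidence
pairs `(v, e)` of `G`, and two distinct pairs `(v, e)`, `(w, f)` are adjacent iff `v = w`
or `e = f`. -/
def completeExpansion {V : Type*} (G : SimpleGraph V) : SimpleGraph (IncidencePair G) :=
  SimpleGraph.fromRel (fun x y =>
    (x : V × Sym2 V).1 = (y : V × Sym2 V).1 ∨ (x : V × Sym2 V).2 = (y : V × Sym2 V).2)

/-- With vertices placed on the spine at positions `f`, the edges `e = {a,b}` and
`e' = {c,d}` cross iff (for suitable representations) `f a < f c < f b < f d`. -/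
def edgesCross {V : Type*} (f : V → ℕ) (e e' : Sym2 V) : Prop :=
  ∃ a b c d : V, e = s(a, b) ∧ e' = s(c, d) ∧ f a < f c ∧ f c < f b ∧ f b < f d

/-- `G` admits a `k`-page book embedding: the vertices are linearly ordered along the spine
(via an injection into `ℕ`), every edge is either drawn on the spine (`none`, which is only
possible for an edge joining two consecutive vertices of the spine) or assigned to one of
`k` pages, and two edges assigned to the same page never cross. -/
def HasBookEmbedding {V : Type*} (G : SimpleGraph V) (k : ℕ) : Prop :=
  ∃ (f : V → ℕ) (page : G.edgeSet → Option (Fin k)),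
    Function.Injective f ∧
    (∀ e : G.edgeSet, page e = none →
      ∃ a b : V, (e : Sym2 V) = s(a, b) ∧ f a < f b ∧ ∀ c : V, ¬(f a < f c ∧ f c < f b)) ∧
    (∀ e e' : G.edgeSet, (page e).isSome → page e = page e' →
      ¬ edgesCross f (e : Sym2 V) (e' : Sym2 V))

/-- The pagenumber of `G`: the least number of pages of a book embedding of `G`. -/
noncomputable def pageNumber {V : Type*} (G : SimpleGraph V) : ℕ :=
  sInf {k | HasBookEmbedding G k}

/-- A family of pairwise noncrossing diagonals of a convex `d`-gon has at most
`d - 3` elements. -/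
lemma chordBound (d : ℕ) : ∀ F : Finset (ℕ × ℕ),
    (∀ p ∈ F, p.1 + 2 ≤ p.2 ∧ p.2 + 1 ≤ d ∧ ¬(p.1 = 0 ∧ p.2 + 1 = d)) →
    (∀ p ∈ F, ∀ q ∈ F, ¬(p.1 < q.1 ∧ q.1 < p.2 ∧ p.2 < q.2)) →
    F.card ≤ d - 3 := by
  induction d using Nat.strong_induction_on with
  | _ d ih =>
  intro F hmem hnc
  rcases F.eq_empty_or_nonempty with rfl | hne
  · simp
  obtain ⟨p0, hp0, hmin⟩ := F.exists_min_image (fun p => p.2 - p.1) hne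
  obtain ⟨i, j⟩ := p0
  obtain ⟨hij, hjd, hnot⟩ := hmem _ hp0
  simp only at hij hjd hnot hmin ⊢
  have hd4 : 4 ≤ d := by omega
  -- the shift map deleting the (unused) vertex `i + 1`
  set s : ℕ → ℕ := fun m => if i + 1 < m then m - 1 else m with hs
  have hsv : ∀ m, (i + 1 < m → s m = m - 1) ∧ (¬ i + 1 < m → s m = m) := by
    intro m
    constructor
    · intro h; simp only [hs]; rw [if_pos h]
    · intro h; simp only [hs]; rw [if_neg h]
  -- no chord other than `(i, j)` has an endpoint strictly inside `(i, j)`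
  have hfacts : ∀ q ∈ F, q ≠ (i, j) →
      (q.1 ≤ i ∨ j ≤ q.1) ∧ (q.2 ≤ i ∨ j ≤ q.2) ∧ ¬(q.1 = i ∧ q.2 = j) := by
    intro q hq hne'
    have hq1 := (hmem q hq).1
    have hm := hmin q hq
    have c0 : ¬(q.1 = i ∧ q.2 = j) := by
      rintro ⟨h1, h2⟩; exact hne' (Prod.ext h1 h2)
    have c1 : ¬(i < q.1 ∧ q.1 < j) := by
      rintro ⟨h1, h2⟩
      have := hnc (i, j) hp0 q hq
      simp only at this
      omega
    have c2 : ¬(i < q.2 ∧ q.2 < j) := by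
      rintro ⟨h1, h2⟩
      have hx := hnc q hq (i, j) hp0
      simp only at hx
      rcases lt_trichotomy q.1 i with h | h | h
      · omega
      · omega
      · exact c1 ⟨h, by omega⟩
    exact ⟨by omega, by omega, c0⟩
  -- the shifted family
  set F' : Finset (ℕ × ℕ) := (F.erase (i, j)).image (fun q => (s q.1, s q.2)) with hF'
  have hcard' : F'.card = F.card - 1 := by
    rw [hF', Finset.card_image_of_injOn, Finset.card_erase_of_mem hp0]
    intro q hq q' hq' heq
    have hfq := hfacts q (Finset.mem_of_mem_erase hq) (Finset.ne_of_mem_erase hq)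
    have hfq' := hfacts q' (Finset.mem_of_mem_erase hq') (Finset.ne_of_mem_erase hq')
    have hq1 := (hmem q (Finset.mem_of_mem_erase hq)).1
    have hq1' := (hmem q' (Finset.mem_of_mem_erase hq')).1
    have e1 : s q.1 = s q'.1 := congrArg Prod.fst heq
    have e2 : s q.2 = s q'.2 := congrArg Prod.snd heq
    have a1 := hsv q.1; have a2 := hsv q.2; have a3 := hsv q'.1; have a4 := hsv q'.2
    exact Prod.ext (by omega) (by omega)
  have hmem' : ∀ p ∈ F', p.1 + 2 ≤ p.2 ∧ p.2 + 1 ≤ d - 1 ∧ ¬(p.1 = 0 ∧ p.2 + 1 = d - 1) := by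
    intro p hp
    rw [hF', Finset.mem_image] at hp
    obtain ⟨q, hq, rfl⟩ := hp
    have hfq := hfacts q (Finset.mem_of_mem_erase hq) (Finset.ne_of_mem_erase hq)
    have hmq := hmem q (Finset.mem_of_mem_erase hq)
    have a1 := hsv q.1; have a2 := hsv q.2
    simp only at hmq ⊢
    omega
  have hnc' : ∀ p ∈ F', ∀ q ∈ F', ¬(p.1 < q.1 ∧ q.1 < p.2 ∧ p.2 < q.2) := by
    intro p hp r hr hcr
    rw [hF', Finset.mem_image] at hp hr
    obtain ⟨q, hq, rfl⟩ := hp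
    obtain ⟨q', hq', rfl⟩ := hr
    have hfq := hfacts q (Finset.mem_of_mem_erase hq) (Finset.ne_of_mem_erase hq)
    have hfq' := hfacts q' (Finset.mem_of_mem_erase hq') (Finset.ne_of_mem_erase hq')
    have hq1 := (hmem q (Finset.mem_of_mem_erase hq)).1
    have hq1' := (hmem q' (Finset.mem_of_mem_erase hq')).1
    have a1 := hsv q.1; have a2 := hsv q.2; have a3 := hsv q'.1; have a4 := hsv q'.2
    simp only at hcr
    have : q.1 < q'.1 ∧ q'.1 < q.2 ∧ q.2 < q'.2 := by omega
    exact hnc q (Finset.mem_of_mem_erase hq) q' (Finset.mem_of_mem_erase hq') this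
  have hle := ih (d - 1) (by omega) F' hmem' hnc'
  have hFpos : 1 ≤ F.card := Finset.card_pos.mpr hne
  omega

lemma sum_aux (d : ℕ) : 2 * ∑ j ∈ Finset.range d, (j - 1) = (d - 1) * (d - 2) := by
  induction d with
  | zero => simp
  | succ n ih =>
    rw [Finset.sum_range_succ, Nat.mul_add, ih]
    rcases n with _ | _ | n
    · simp
    · simp
    · show (n + 1) * n + 2 * (n + 1) = (n + 2) * (n + 1)
      ring

/-- The set of interior chords among `d` points, with its cardinality. -/
lemma chordSet (d : ℕ) (hd : 4 ≤ d) :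
    ∃ D : Finset (ℕ × ℕ),
      (∀ p, p ∈ D ↔ (p.1 + 2 ≤ p.2 ∧ p.2 < d ∧ ¬(p.1 = 0 ∧ p.2 + 1 = d))) ∧
      2 * D.card + 2 = (d - 1) * (d - 2) := by
  classical
  set E2 : Finset (ℕ × ℕ) :=
    (Finset.range d).biUnion (fun j => (Finset.range (j - 1)).image (fun i => (i, j))) with hE2
  have hmemE2 : ∀ p : ℕ × ℕ, p ∈ E2 ↔ (p.1 + 2 ≤ p.2 ∧ p.2 < d) := by
    intro p
    simp only [hE2, Finset.mem_biUnion, Finset.mem_range, Finset.mem_image]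
    constructor
    · rintro ⟨j, hj, i, hi, rfl⟩
      simp only
      omega
    · rintro ⟨h1, h2⟩
      exact ⟨p.2, h2, p.1, by omega, rfl⟩
  have hcardE2 : 2 * E2.card = (d - 1) * (d - 2) := by
    rw [hE2, Finset.card_biUnion, ← sum_aux d]
    · congr 1
      refine Finset.sum_congr rfl (fun j _ => ?_)
      rw [Finset.card_image_of_injective _ (fun a b h => (Prod.mk.injEq _ _ _ _).mp h |>.1),
        Finset.card_range]
    · intro x _ y _ hxy
      simp only [Finset.disjoint_left, Finset.mem_image, Finset.mem_range]
      rintro p ⟨i, hi, rfl⟩ ⟨i', hi', h⟩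
      exact hxy ((Prod.mk.injEq _ _ _ _).mp h).2.symm
  refine ⟨E2.erase (0, d - 1), ?_, ?_⟩
  · intro p
    rw [Finset.mem_erase, hmemE2]
    constructor
    · rintro ⟨h1, h2, h3⟩
      refine ⟨h2, h3, ?_⟩
      rintro ⟨ha, hb⟩
      exact h1 (Prod.ext ha (by omega))
    · rintro ⟨h1, h2, h3⟩
      refine ⟨?_, h1, h2⟩
      rintro rfl
      exact h3 ⟨rfl, by omega⟩
  · have hmem : (0, d - 1) ∈ E2 := (hmemE2 _).mpr (by simp; omega)
    have : 1 ≤ E2.card := Finset.card_pos.mpr ⟨_, hmem⟩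
    rw [Finset.card_erase_of_mem hmem, ← hcardE2]
    omega

/-- Every finite graph has some book embedding. -/
lemma exists_bookEmbedding {W : Type*} [Finite W] (H : SimpleGraph W) :
    ∃ k, HasBookEmbedding H k := by
  classical
  obtain ⟨f, hf⟩ := exists_injective_nat W
  set n := Nat.card H.edgeSet with hn
  refine ⟨n + 1, f, fun e => some ((Finite.equivFin H.edgeSet e).castSucc), hf, ?_, ?_⟩
  · intro e he; simp at he
  · intro e e' _ heq
    have he : e = e' := by
      have h1 := Option.some_injective _ heq
      have h2 := Fin.castSucc_injective _ h1
      exact (Finite.equivFin H.edgeSet).injective h2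
    subst he
    rintro ⟨a, b, c, dd, h1, h2, h3, h4, h5⟩
    rw [h1] at h2
    rcases Sym2.eq_iff.mp h2 with ⟨rfl, rfl⟩ | ⟨rfl, rfl⟩ <;> omega

lemma arith_aux (dd kk c : ℕ) (h4 : 4 ≤ dd) (h2 : 2 * c + 2 = (dd - 1) * (dd - 2))
    (h3 : c ≤ kk * (dd - 3)) : (dd + 1) / 2 ≤ kk := by
  obtain ⟨m, rfl⟩ : ∃ m, dd = m + 4 := ⟨dd - 4, by omega⟩
  have h2' : 2 * c = (m + 4) * (m + 1) := by
    have he : (m + 4 - 1) * (m + 4 - 2) = (m + 4) * (m + 1) + 2 := by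
      show (m + 3) * (m + 2) = _; ring
    omega
  have h3' : (m + 4) * (m + 1) ≤ (2 * kk) * (m + 1) := by
    calc (m + 4) * (m + 1) = 2 * c := h2'.symm
      _ ≤ 2 * (kk * (m + 4 - 3)) := by omega
      _ = (2 * kk) * (m + 1) := by show 2 * (kk * (m + 1)) = _; ring
  have := Nat.le_of_mul_le_mul_right h3' (by omega : 0 < m + 1)
  omega

theorem stmt6 {V : Type*} [Fintype V] (G : SimpleGraph V) [DecidableRel G.Adj]
    (hΔ : 4 ≤ G.maxDegree) :
    (G.maxDegree + 1) / 2 ≤ pageNumber (completeExpansion G) := by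
  classical
  have hnV : Nonempty V := by
    by_contra h
    rw [not_nonempty_iff] at h
    have : G.maxDegree = 0 := by simp [SimpleGraph.maxDegree]
    omega
  obtain ⟨v, hv⟩ := G.exists_maximal_degree_vertex
  set d := G.maxDegree with hdd
  obtain ⟨k0, hk0⟩ := exists_bookEmbedding (completeExpansion G)
  refine le_csInf ⟨k0, hk0⟩ ?_
  rintro k ⟨f, page, hinj, hnone, hcross⟩
  -- the clique at `v`
  have hvadj : ∀ u : {u // u ∈ G.neighborFinset v}, G.Adj v u.1 := fun u =>
    (SimpleGraph.mem_neighborFinset _ _ _).mp u.2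
  set nb : {u // u ∈ G.neighborFinset v} → IncidencePair G :=
    fun u => ⟨(v, s(v, u.1)), (G.mem_edgeSet).mpr (hvadj u), Sym2.mem_mk_left v u.1⟩ with hnb
  have hnbinj : Function.Injective nb := by
    intro u u' h
    simp only [hnb, Subtype.mk.injEq, Prod.mk.injEq, true_and] at h
    rcases Sym2.eq_iff.mp h with ⟨-, h2⟩ | ⟨h1, -⟩
    · exact Subtype.ext h2
    · have hadj' := hvadj u'
      rw [← h1] at hadj'
      exact absurd hadj' (G.loopless.irrefl v)
  set P : Finset ℕ := Finset.univ.image (fun u => f (nb u)) with hP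
  have hPcard : P.card = d := by
    have hcomp : Function.Injective (fun u => f (nb u)) := fun a b h => hnbinj (hinj h)
    rw [hP, Finset.card_image_of_injective _ hcomp, Finset.card_univ,
      Fintype.card_coe, SimpleGraph.card_neighborFinset_eq_degree, ← hv]
  set g : Fin d → ℕ := fun i => ((P.orderIsoOfFin hPcard) i : ℕ) with hg
  have hgmono : StrictMono g := fun a b h =>
    Subtype.coe_lt_coe.mpr ((P.orderIsoOfFin hPcard).strictMono h)
  have hchoice : ∀ i : Fin d, ∃ u, f (nb u) = g i := by
    intro i
    have hgi : (g i) ∈ P := (P.orderIsoOfFin hPcard i).2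
    rw [hP, Finset.mem_image] at hgi
    obtain ⟨u, -, hu⟩ := hgi
    exact ⟨u, hu⟩
  choose uu huu using hchoice
  set w : Fin d → IncidencePair G := fun i => nb (uu i) with hwdef
  have hwf : ∀ i, f (w i) = g i := fun i => huu i
  have hwinj : ∀ {i j : Fin d}, w i = w j → i = j := by
    intro i j h
    have : g i = g j := by rw [← hwf i, ← hwf j, h]
    exact hgmono.injective this
  have hadj : ∀ {i j : Fin d}, i ≠ j → (completeExpansion G).Adj (w i) (w j) := by
    intro i j hij
    rw [completeExpansion, SimpleGraph.fromRel_adj]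
    exact ⟨fun h => hij (hwinj h), Or.inl (Or.inl rfl)⟩
  set E : ∀ (i j : Fin d), i ≠ j → (completeExpansion G).edgeSet :=
    fun i j hij => ⟨s(w i, w j), ((completeExpansion G).mem_edgeSet).mpr (hadj hij)⟩ with hE
  -- the page assignment of chords
  set pg : ℕ × ℕ → Option (Fin k) := fun p =>
    if h : p.1 < d ∧ p.2 < d ∧ p.1 ≠ p.2 then
      page (E ⟨p.1, h.1⟩ ⟨p.2, h.2.1⟩ (fun he => h.2.2 (congrArg Fin.val he)))
    else none with hpg
  have hpgval : ∀ (p : ℕ × ℕ) (h1 : p.1 < d) (h2 : p.2 < d) (h3 : p.1 ≠ p.2),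
      pg p = page (E ⟨p.1, h1⟩ ⟨p.2, h2⟩ (fun he => h3 (congrArg Fin.val he))) := by
    intro p h1 h2 h3
    rw [hpg]
    exact dif_pos ⟨h1, h2, h3⟩
  obtain ⟨D, hDmem, hDcard⟩ := chordSet d hΔ
  -- pages of interior chords are defined (not `none`)
  have hnonefiber : (D.filter (fun p => pg p = none)).card = 0 := by
    rw [Finset.card_eq_zero, Finset.filter_eq_empty_iff]
    intro p hp
    obtain ⟨h1, h2, h3⟩ := (hDmem p).mp hp
    have hpd : p.1 < d := by omega
    have hne12 : p.1 ≠ p.2 := by omega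
    rw [hpgval p hpd h2 hne12]
    intro hnone'
    obtain ⟨a, b, heq, hab, hbet⟩ := hnone _ hnone'
    have hgij : g ⟨p.1, hpd⟩ < g ⟨p.2, h2⟩ := hgmono (by rw [Fin.mk_lt_mk]; omega)
    rcases Sym2.eq_iff.mp heq with ⟨ha, hb⟩ | ⟨ha, hb⟩
    · refine hbet (w ⟨p.1 + 1, by omega⟩) ⟨?_, ?_⟩
      · rw [← ha, hwf, hwf]
        exact hgmono (by rw [Fin.mk_lt_mk]; omega)
      · rw [← hb, hwf, hwf]
        exact hgmono (by rw [Fin.mk_lt_mk]; omega)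
    · rw [← ha, ← hb, hwf, hwf] at hab
      omega
  -- chords on a common page do not cross
  have hfiber : ∀ q : Fin k, (D.filter (fun p => pg p = some q)).card ≤ d - 3 := by
    intro q
    apply chordBound d
    · intro p hp
      obtain ⟨h1, h2, h3⟩ := (hDmem p).mp (Finset.mem_filter.mp hp).1
      exact ⟨h1, by omega, h3⟩
    · intro p hp r hr hcr
      obtain ⟨hpD, hppg⟩ := Finset.mem_filter.mp hp
      obtain ⟨hrD, hrpg⟩ := Finset.mem_filter.mp hr
      obtain ⟨hp1, hp2, -⟩ := (hDmem p).mp hpD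
      obtain ⟨hr1, hr2, -⟩ := (hDmem r).mp hrD
      have hpd1 : p.1 < d := by omega
      have hrd1 : r.1 < d := by omega
      have hnep : p.1 ≠ p.2 := by omega
      have hner : r.1 ≠ r.2 := by omega
      rw [hpgval p hpd1 hp2 hnep] at hppg
      rw [hpgval r hrd1 hr2 hner] at hrpg
      apply hcross (E ⟨p.1, hpd1⟩ ⟨p.2, hp2⟩ (fun he => hnep (congrArg Fin.val he)))
        (E ⟨r.1, hrd1⟩ ⟨r.2, hr2⟩ (fun he => hner (congrArg Fin.val he)))
        (by rw [hppg]; rfl) (by rw [hppg, hrpg])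
      exact ⟨w ⟨p.1, hpd1⟩, w ⟨p.2, hp2⟩, w ⟨r.1, hrd1⟩, w ⟨r.2, hr2⟩, rfl, rfl,
        (by rw [hwf, hwf]; exact hgmono (by rw [Fin.mk_lt_mk]; omega)),
        (by rw [hwf, hwf]; exact hgmono (by rw [Fin.mk_lt_mk]; omega)),
        (by rw [hwf, hwf]; exact hgmono (by rw [Fin.mk_lt_mk]; omega))⟩
  have hsplit : D.card = ∑ o : Option (Fin k), (D.filter (fun p => pg p = o)).card :=
    Finset.card_eq_sum_card_fiberwise (fun p _ => Finset.mem_univ _)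
  have hsum : D.card ≤ k * (d - 3) := by
    rw [hsplit, Fintype.sum_option, hnonefiber, zero_add]
    calc ∑ q : Fin k, (D.filter (fun p => pg p = some q)).card
        ≤ ∑ _q : Fin k, (d - 3) := Finset.sum_le_sum (fun q _ => hfiber q)
      _ = k * (d - 3) := by
          rw [Finset.sum_const, Finset.card_univ, Fintype.card_fin, smul_eq_mul]
  exact arith_aux d k D.card hΔ hDcard hsum
end

section
/- Let G be a finite simple graph with maximum degree Δ(G). Then pn(E_c(G)) ≤ pn(G) + ⌈Δ(G)/2⌉, where E_c(G) is the complete expansion graph of G and pn denotes the pagenumber. -/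
open SimpleGraph

lemma not_edgesCross_self {W : Type*} (f : W → ℕ) (e : Sym2 W) : ¬ edgesCross f e e := by
  rintro ⟨a, b, c, d, h1, h2, h3, h4, h5⟩
  rw [h1, Sym2.eq_iff] at h2
  rcases h2 with ⟨rfl, rfl⟩ | ⟨rfl, rfl⟩ <;> omega

section CEG
variable {V : Type*} {G : SimpleGraph V}

noncomputable def ipOther (a : IncidencePair G) : V := Sym2.Mem.other a.2.2

lemma ipOther_spec (a : IncidencePair G) : s(a.1.1, ipOther a) = a.1.2 := Sym2.other_spec _

lemma ipOther_adj (a : IncidencePair G) : G.Adj a.1.1 (ipOther a) := by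
  rw [← SimpleGraph.mem_edgeSet, ipOther_spec]; exact a.2.1

lemma ipOther_ne (a : IncidencePair G) : ipOther a ≠ a.1.1 :=
  fun h => G.irrefl (h ▸ ipOther_adj a)

lemma ipOther_eq {a : IncidencePair G} {w : V} (h : a.1.2 = s(a.1.1, w)) : ipOther a = w := by
  have := ipOther_spec a; rw [h] at this; exact Sym2.congr_right.mp this

lemma ip_ext {a b : IncidencePair G} (h1 : a.1.1 = b.1.1) (h2 : a.1.2 = b.1.2) : a = b :=
  Subtype.ext (Prod.ext h1 h2)

noncomputable def rIdx (f : V → ℕ) (M1 : ℕ) (a : IncidencePair G) : ℕ :=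
  if f (ipOther a) < f a.1.1 then M1 - f (ipOther a) else 2 * M1 - f (ipOther a)

noncomputable def FPos (f : V → ℕ) (M1 : ℕ) (a : IncidencePair G) : ℕ :=
  f a.1.1 * (2 * M1 + 1) + rIdx f M1 a

noncomputable def rnk (f : V → ℕ) (M1 : ℕ) (a : IncidencePair G) : ℕ :=
  {b : IncidencePair G | b.1.1 = a.1.1 ∧ rIdx f M1 b < rIdx f M1 a}.ncard

variable {f : V → ℕ} {M1 : ℕ}

lemma rIdx_bounds (hM : ∀ v, f v < M1) (a : IncidencePair G) :
    1 ≤ rIdx f M1 a ∧ rIdx f M1 a ≤ 2 * M1 := by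
  have h1 := hM (ipOther a)
  unfold rIdx; split <;> omega

lemma rIdx_right {a : IncidencePair G}
    (h : f a.1.1 < f (ipOther a)) : rIdx f M1 a = 2 * M1 - f (ipOther a) := by
  rw [rIdx, if_neg (by omega)]

lemma rIdx_left {a : IncidencePair G}
    (h : f (ipOther a) < f a.1.1) : rIdx f M1 a = M1 - f (ipOther a) := by
  rw [rIdx, if_pos h]

lemma FPos_lt_of_lt (hM : ∀ v, f v < M1) {a b : IncidencePair G}
    (h : f a.1.1 < f b.1.1) : FPos f M1 a < FPos f M1 b := by
  have h1 := (rIdx_bounds hM a).2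
  have h2 := (rIdx_bounds hM b).1
  unfold FPos; nlinarith

lemma le_of_FPos_lt (hM : ∀ v, f v < M1) {a b : IncidencePair G}
    (h : FPos f M1 a < FPos f M1 b) : f a.1.1 ≤ f b.1.1 := by
  by_contra hc
  have := FPos_lt_of_lt (G := G) hM (a := b) (b := a) (by omega)
  omega

lemma rIdx_lt_of_FPos_lt {a b : IncidencePair G}
    (hv : f a.1.1 = f b.1.1) (h : FPos f M1 a < FPos f M1 b) :
    rIdx f M1 a < rIdx f M1 b := by
  unfold FPos at h; rw [hv] at h; omega

lemma FPos_injective (hM : ∀ v, f v < M1) (hf : Function.Injective f) :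
    Function.Injective (FPos (G := G) f M1) := by
  intro a b h
  rcases lt_trichotomy (f a.1.1) (f b.1.1) with hlt | heq | hgt
  · exact absurd (FPos_lt_of_lt hM hlt) (by omega)
  · have hv : a.1.1 = b.1.1 := hf heq
    have hr : rIdx f M1 a = rIdx f M1 b := by unfold FPos at h; rw [heq] at h; omega
    have hoa := hM (ipOther a)
    have hob := hM (ipOther b)
    have ho : ipOther a = ipOther b := by
      apply hf
      unfold rIdx at hr
      rw [hv] at hr
      split at hr <;> split at hr <;> omega
    exact ip_ext hv (by rw [← ipOther_spec a, ← ipOther_spec b, hv, ho])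
  · exact absurd (FPos_lt_of_lt hM hgt) (by omega)

lemma block_ncard [Fintype V] [DecidableRel G.Adj] (v : V) :
    {b : IncidencePair G | b.1.1 = v}.ncard = G.degree v := by
  have himg : ipOther '' {b : IncidencePair G | b.1.1 = v} = G.neighborSet v := by
    ext w
    constructor
    · rintro ⟨b, hb, rfl⟩
      exact hb ▸ ipOther_adj b
    · intro hw
      refine ⟨⟨(v, s(v, w)), (G.mem_edgeSet).mpr hw, Sym2.mem_mk_left v w⟩, rfl, ?_⟩
      exact ipOther_eq rfl
  have hinj : Set.InjOn ipOther {b : IncidencePair G | b.1.1 = v} := by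
    intro a ha b hb h
    exact ip_ext (ha.trans hb.symm)
      (by rw [← ipOther_spec a, ← ipOther_spec b, h, ha, hb])
  calc {b : IncidencePair G | b.1.1 = v}.ncard
      = (ipOther '' {b : IncidencePair G | b.1.1 = v}).ncard :=
        (Set.ncard_image_of_injOn hinj).symm
    _ = (G.neighborSet v).ncard := by rw [himg]
    _ = G.degree v := by
        rw [Set.ncard_eq_toFinset_card', ← SimpleGraph.neighborFinset_def]; rfl

lemma rnk_lt_degree [Fintype V] [DecidableRel G.Adj] (a : IncidencePair G) :
    rnk f M1 a < G.degree a.1.1 := by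
  rw [← block_ncard (G := G) a.1.1]
  apply Set.ncard_lt_ncard
  · constructor
    · exact fun b hb => hb.1
    · intro hsub
      exact absurd ((hsub (show a ∈ {b : IncidencePair G | b.1.1 = a.1.1} from rfl)).2)
        (lt_irrefl _)
  · exact Set.toFinite _

lemma rnk_lt_rnk [Finite V] {a b : IncidencePair G} (hv : a.1.1 = b.1.1)
    (hr : rIdx f M1 a < rIdx f M1 b) : rnk f M1 a < rnk f M1 b := by
  apply Set.ncard_lt_ncard
  · constructor
    · exact fun c hc => ⟨hc.1.trans hv, hc.2.trans hr⟩
    · intro hsub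
      exact absurd ((hsub ⟨hv, hr⟩).2) (lt_irrefl _)
  · exact Set.toFinite _

end CEG

section CEG2
variable {V : Type*} {G : SimpleGraph V} {f : V → ℕ} {M1 : ℕ}

lemma num_lemma {d i j k l : ℕ} (h1 : i < k) (h2 : k < j) (h3 : j < l) (h4 : l < d)
    (hpage : ((i + j) % d) / 2 = ((k + l) % d) / 2) : False := by
  have hij : i + j < 2 * d := by omega
  have hkl : k + l < 2 * d := by omega
  rcases Nat.lt_or_ge (i + j) d with h | h <;> rcases Nat.lt_or_ge (k + l) d with h' | h'
  · rw [Nat.mod_eq_of_lt h, Nat.mod_eq_of_lt h'] at hpage; omega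
  · rw [Nat.mod_eq_of_lt h, Nat.mod_eq_sub_mod h', Nat.mod_eq_of_lt (by omega)] at hpage
    omega
  · omega
  · rw [Nat.mod_eq_sub_mod h, Nat.mod_eq_of_lt (by omega),
      Nat.mod_eq_sub_mod h', Nat.mod_eq_of_lt (by omega)] at hpage
    omega

/-- Edges lying in two different vertex-blocks never cross. -/
lemma sep_lemma (hM : ∀ v, f v < M1) {a b c d : IncidencePair G}
    (hab : a.1.1 = b.1.1) (hcd : c.1.1 = d.1.1) (hne : f a.1.1 ≠ f c.1.1) :
    ¬ edgesCross (FPos f M1) s(a, b) s(c, d) := by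
  rintro ⟨a', b', c', d', he1, he2, j1, j2, j3⟩
  have hA : f a'.1.1 = f a.1.1 ∧ f b'.1.1 = f a.1.1 := by
    rcases Sym2.eq_iff.mp he1.symm with ⟨rfl, rfl⟩ | ⟨rfl, rfl⟩
    · exact ⟨rfl, congrArg f hab.symm⟩
    · exact ⟨congrArg f hab.symm, rfl⟩
  have hC : f c'.1.1 = f c.1.1 ∧ f d'.1.1 = f c.1.1 := by
    rcases Sym2.eq_iff.mp he2.symm with ⟨rfl, rfl⟩ | ⟨rfl, rfl⟩
    · exact ⟨rfl, congrArg f hcd.symm⟩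
    · exact ⟨congrArg f hcd.symm, rfl⟩
  rcases hne.lt_or_gt with h | h
  · have := le_of_FPos_lt hM j2
    omega
  · have := le_of_FPos_lt hM j1
    omega

/-- Two expanded edges (of distinct `G`-edges that do not cross in the `G`-embedding)
do not cross. -/
lemma cross_exp (hM : ∀ v, f v < M1) (hf : Function.Injective f)
    {p1 p2 q1 q2 : IncidencePair G} {eh gh : Sym2 V}
    (hp1 : p1.1.2 = eh) (hp2 : p2.1.2 = eh) (hq1 : q1.1.2 = gh) (hq2 : q2.1.2 = gh)
    (hpne : p1.1.1 ≠ p2.1.1) (hqne : q1.1.1 ≠ q2.1.1) (heg : eh ≠ gh)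
    (hnc : ¬ edgesCross f eh gh)
    (h1 : FPos f M1 p1 < FPos f M1 q1) (h2 : FPos f M1 q1 < FPos f M1 p2)
    (h3 : FPos f M1 p2 < FPos f M1 q2) : False := by
  set u1 := p1.1.1 with hu1
  set u2 := p2.1.1 with hu2
  set x1 := q1.1.1 with hx1
  set x2 := q2.1.1 with hx2
  -- membership facts
  have hmu1 : u1 ∈ eh := hp1 ▸ p1.2.2
  have hmu2 : u2 ∈ eh := hp2 ▸ p2.2.2
  have hmx1 : x1 ∈ gh := hq1 ▸ q1.2.2
  have hmx2 : x2 ∈ gh := hq2 ▸ q2.2.2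
  have heuw : eh = s(u1, u2) :=
    Sym2.eq_of_ne_mem hpne hmu1 hmu2 (Sym2.mem_mk_left _ _) (Sym2.mem_mk_right _ _)
  have hgxy : gh = s(x1, x2) :=
    Sym2.eq_of_ne_mem hqne hmx1 hmx2 (Sym2.mem_mk_left _ _) (Sym2.mem_mk_right _ _)
  have hop1 : ipOther p1 = u2 := ipOther_eq (by rw [hp1, heuw])
  have hop2 : ipOther p2 = u1 := ipOther_eq (by rw [hp2, heuw, Sym2.eq_swap])
  have hoq1 : ipOther q1 = x2 := ipOther_eq (by rw [hq1, hgxy])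
  have hoq2 : ipOther q2 = x1 := ipOther_eq (by rw [hq2, hgxy, Sym2.eq_swap])
  have le1 : f u1 ≤ f x1 := le_of_FPos_lt hM h1
  have le2 : f x1 ≤ f u2 := le_of_FPos_lt hM h2
  have le3 : f u2 ≤ f x2 := le_of_FPos_lt hM h3
  have hMu2 := hM u2
  have hMx2 := hM x2
  have hMu1 := hM u1
  have hMx1 := hM x1
  have hne12 : f u1 ≠ f u2 := fun h => hpne (hf h)
  have hnex12 : f x1 ≠ f x2 := fun h => hqne (hf h)
  rcases eq_or_lt_of_le le1 with hv1 | hv1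
  · -- u1 = x1
    have hvv : u1 = x1 := hf hv1
    have s2 : f x1 < f u2 := by omega
    have s3 : f u2 < f x2 := by
      rcases eq_or_lt_of_le le3 with h | h
      · exact absurd (by rw [heuw, hgxy, ← hvv, ← hf h]) heg
      · exact h
    have hr : rIdx f M1 p1 < rIdx f M1 q1 :=
      rIdx_lt_of_FPos_lt (by rw [← hu1, ← hx1, hvv]) h1
    rw [rIdx_right (by rw [hop1, ← hu1]; omega), rIdx_right (by rw [hoq1, ← hx1]; omega),
      hop1, hoq1] at hr
    omega
  · rcases eq_or_lt_of_le le2 with hv2 | hv2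
    · -- x1 = u2
      have hr : rIdx f M1 q1 < rIdx f M1 p2 :=
        rIdx_lt_of_FPos_lt (by rw [← hu2, ← hx1, hv2]) h2
      have s3 : f u2 < f x2 := by omega
      rw [rIdx_right (by rw [hoq1, ← hx1]; omega), rIdx_left (by rw [hop2, ← hu2]; omega),
        hoq1, hop2] at hr
      omega
    · rcases eq_or_lt_of_le le3 with hv3 | hv3
      · -- u2 = x2
        have hr : rIdx f M1 p2 < rIdx f M1 q2 :=
          rIdx_lt_of_FPos_lt (by rw [← hu2, ← hx2, hv3]) h3
        rw [rIdx_left (by rw [hop2, ← hu2]; omega), rIdx_left (by rw [hoq2, ← hx2]; omega),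
          hop2, hoq2] at hr
        omega
      · exact hnc ⟨u1, u2, x1, x2, heuw, hgxy, hv1, hv2, hv3⟩

/-- Two clique edges inside the same block, on the same page, do not cross. -/
lemma clique_cross [Fintype V] [DecidableRel G.Adj] (hM : ∀ v, f v < M1)
    (hf : Function.Injective f) {a b c d : IncidencePair G}
    (hab : a.1.1 = b.1.1) (hcd : c.1.1 = d.1.1) (hv : a.1.1 = c.1.1)
    (hpage : ((rnk f M1 a + rnk f M1 b) % (G.degree a.1.1)) / 2 =
      ((rnk f M1 c + rnk f M1 d) % (G.degree c.1.1)) / 2)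
    (hcr : edgesCross (FPos f M1) s(a, b) s(c, d)) : False := by
  obtain ⟨a', b', c', d', he1, he2, j1, j2, j3⟩ := hcr
  have hsumA : rnk f M1 a' + rnk f M1 b' = rnk f M1 a + rnk f M1 b ∧
      a'.1.1 = a.1.1 ∧ b'.1.1 = a.1.1 := by
    rcases Sym2.eq_iff.mp he1.symm with ⟨rfl, rfl⟩ | ⟨rfl, rfl⟩
    · exact ⟨rfl, rfl, hab.symm⟩
    · exact ⟨Nat.add_comm _ _, hab.symm, rfl⟩
  have hsumC : rnk f M1 c' + rnk f M1 d' = rnk f M1 c + rnk f M1 d ∧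
      c'.1.1 = c.1.1 ∧ d'.1.1 = c.1.1 := by
    rcases Sym2.eq_iff.mp he2.symm with ⟨rfl, rfl⟩ | ⟨rfl, rfl⟩
    · exact ⟨rfl, rfl, hcd.symm⟩
    · exact ⟨Nat.add_comm _ _, hcd.symm, rfl⟩
  obtain ⟨hsA, ha', hb'⟩ := hsumA
  obtain ⟨hsC, hc', hd'⟩ := hsumC
  have r1 : rIdx f M1 a' < rIdx f M1 c' := rIdx_lt_of_FPos_lt (by rw [ha', hc', hv]) j1
  have r2 : rIdx f M1 c' < rIdx f M1 b' := rIdx_lt_of_FPos_lt (by rw [hc', hb', hv]) j2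
  have r3 : rIdx f M1 b' < rIdx f M1 d' := rIdx_lt_of_FPos_lt (by rw [hb', hd', hv]) j3
  have n1 : rnk f M1 a' < rnk f M1 c' := rnk_lt_rnk (by rw [ha', hc', hv]) r1
  have n2 : rnk f M1 c' < rnk f M1 b' := rnk_lt_rnk (by rw [hc', hb', hv]) r2
  have n3 : rnk f M1 b' < rnk f M1 d' := rnk_lt_rnk (by rw [hb', hd', hv]) r3
  have hdlt : rnk f M1 d' < G.degree a.1.1 := by
    have := rnk_lt_degree (f := f) (M1 := M1) d'
    rwa [hd', ← hv] at this
  rw [← hsA, ← hsC, ← hv] at hpage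
  exact num_lemma n1 n2 n3 hdlt hpage

/-- Expanded spine edges stay spine edges: the endpoints of the expansion of an edge
joining consecutive vertices are consecutive. -/
lemma spine_lemma (hM : ∀ v, f v < M1) (hf : Function.Injective f)
    {u w : V} {e : Sym2 V} {pu pw : IncidencePair G}
    (hpu : pu.1 = (u, e)) (hpw : pw.1 = (w, e))
    (huw : f u < f w) (hmid : ∀ c : V, ¬ (f u < f c ∧ f c < f w)) :
    FPos f M1 pu < FPos f M1 pw ∧
      ∀ z : IncidencePair G, ¬ (FPos f M1 pu < FPos f M1 z ∧ FPos f M1 z < FPos f M1 pw) := by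
  have hpu1 : pu.1.1 = u := by rw [hpu]
  have hpu2 : pu.1.2 = e := by rw [hpu]
  have hpw1 : pw.1.1 = w := by rw [hpw]
  have hpw2 : pw.1.2 = e := by rw [hpw]
  have hne : u ≠ w := fun h => by rw [h] at huw; omega
  have hmw : w ∈ e := by rw [← hpw2]; exact hpw.symm ▸ pw.2.2
  have hmu : u ∈ e := by rw [← hpu2]; exact hpu.symm ▸ pu.2.2
  have heuw : e = s(u, w) :=
    Sym2.eq_of_ne_mem hne hmu hmw (Sym2.mem_mk_left _ _) (Sym2.mem_mk_right _ _)
  have hou : ipOther pu = w := ipOther_eq (by rw [hpu2, heuw, hpu1])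
  have how : ipOther pw = u := ipOther_eq (by rw [hpw2, heuw, hpw1, Sym2.eq_swap])
  have hru : rIdx f M1 pu = 2 * M1 - f w := by
    rw [rIdx_right (by rw [hou, hpu1]; omega), hou]
  have hrw : rIdx f M1 pw = M1 - f u := by
    rw [rIdx_left (by rw [how, hpw1]; omega), how]
  have hMu := hM u
  have hMw := hM w
  constructor
  · exact FPos_lt_of_lt hM (by rw [hpu1, hpw1]; omega)
  · rintro z ⟨hz1, hz2⟩
    have hle1 : f u ≤ f z.1.1 := by have := le_of_FPos_lt hM hz1; rwa [hpu1] at this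
    have hle2 : f z.1.1 ≤ f w := by have := le_of_FPos_lt hM hz2; rwa [hpw1] at this
    have hMz := hM z.1.1
    have hMo := hM (ipOther z)
    have hone : f (ipOther z) ≠ f z.1.1 := fun h => ipOther_ne z (hf h)
    rcases eq_or_lt_of_le hle1 with hzu | hzu
    · -- z in the block of u : its rIdx must exceed that of pu, impossible
      have hr : rIdx f M1 pu < rIdx f M1 z :=
        rIdx_lt_of_FPos_lt (by rw [hpu1, hzu]) hz1
      rw [hru] at hr
      have := hmid (ipOther z)
      unfold rIdx at hr
      split at hr <;> omega
    · rcases eq_or_lt_of_le hle2 with hzw | hzw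
      · -- z in the block of w
        have hr : rIdx f M1 z < rIdx f M1 pw :=
          rIdx_lt_of_FPos_lt (by rw [hpw1, hzw]) hz2
        rw [hrw] at hr
        have := hmid (ipOther z)
        unfold rIdx at hr
        split at hr <;> omega
      · exact hmid z.1.1 ⟨hzu, hzw⟩

/-- Every finite graph has some book embedding. -/
lemma exists_hasBookEmbedding {W : Type*} [Finite W] (H : SimpleGraph W) :
    HasBookEmbedding H (Nat.card H.edgeSet) := by
  have : Finite H.edgeSet := by
    have : Finite (Sym2 W) := by
      have := Fintype.ofFinite W
      infer_instance
    exact Subtype.finite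
  refine ⟨fun v => (Finite.equivFin W v : ℕ),
    fun e => some (Finite.equivFin H.edgeSet e), ?_, ?_, ?_⟩
  · intro a b h
    exact (Finite.equivFin W).injective (Fin.val_injective h)
  · intro e h
    simp at h
  · intro e e' _ h hcr
    have : e = e' := (Finite.equivFin H.edgeSet).injective (by simpa using h)
    subst this
    exact not_edgesCross_self _ _ hcr

end CEG2

theorem stmt7 {V : Type*} [Fintype V] (G : SimpleGraph V) [DecidableRel G.Adj] :
    pageNumber (completeExpansion G) ≤ pageNumber G + (G.maxDegree + 1) / 2 := by
  classical
  set q := (G.maxDegree + 1) / 2 with hqdef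
  have hne : {k | HasBookEmbedding G k}.Nonempty := ⟨_, exists_hasBookEmbedding G⟩
  have hG : HasBookEmbedding G (pageNumber G) := Nat.sInf_mem hne
  set k := pageNumber G with hk
  obtain ⟨f, page, hf, hnone, hcross⟩ := hG
  set M1 : ℕ := (Finset.univ.sup f) + 1 with hM1
  have hM : ∀ v, f v < M1 := fun v => Nat.lt_succ_of_le (Finset.le_sup (Finset.mem_univ v))
  -- the embedding of pages `Fin k → Fin (k+q)` and the per-block clique pages
  set emb : Fin k → Fin (k + q) := fun i => ⟨i.1, by omega⟩ with hemb
  set mkPage : ℕ → Option (Fin (k + q)) := fun c =>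
    if h : c < q then some ⟨k + c, by omega⟩ else none with hmkPage
  -- the page assignment, as a symmetric function of the two endpoints
  set P : IncidencePair G → IncidencePair G → Option (Fin (k + q)) := fun a b =>
    if hE : a.1.2 = b.1.2 then (page ⟨a.1.2, a.2.1⟩).map emb
    else if a.1.1 = b.1.1 then
      mkPage (((rnk f M1 a + rnk f M1 b) % (G.degree a.1.1)) / 2)
    else none
    with hPdef
  have hPsymm : ∀ a b, P a b = P b a := by
    intro a b
    by_cases hE : a.1.2 = b.1.2
    · have hee : (⟨a.1.2, a.2.1⟩ : G.edgeSet) = ⟨b.1.2, b.2.1⟩ := Subtype.ext hE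
      simp only [hPdef, dif_pos hE, dif_pos hE.symm, hee]
    · have hE' : ¬ (b.1.2 = a.1.2) := fun h => hE h.symm
      by_cases hV : a.1.1 = b.1.1
      · simp only [hPdef, dif_neg hE, dif_neg hE', if_pos hV, if_pos hV.symm]
        congr 1
        rw [Nat.add_comm (rnk f M1 a), hV]
      · have hV' : ¬ ((b : V × Sym2 V).1 = (a : V × Sym2 V).1) := fun h => hV h.symm
        simp only [hPdef, dif_neg hE, dif_neg hE', if_neg hV, if_neg hV']
  set page' : (completeExpansion G).edgeSet → Option (Fin (k + q)) :=
    fun ε => Sym2.lift ⟨P, hPsymm⟩ ε.1 with hpage'def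
  have hpage' : ∀ (a b : IncidencePair G) (h : s(a, b) ∈ (completeExpansion G).edgeSet),
      page' ⟨s(a, b), h⟩ = P a b := fun a b h => Sym2.lift_mk ⟨P, hPsymm⟩ a b
  have hadj : ∀ {a b : IncidencePair G}, s(a, b) ∈ (completeExpansion G).edgeSet →
      a ≠ b ∧ (a.1.1 = b.1.1 ∨ a.1.2 = b.1.2) := by
    intro a b h
    rw [SimpleGraph.mem_edgeSet, completeExpansion, SimpleGraph.fromRel_adj] at h
    refine ⟨h.1, ?_⟩
    rcases h.2 with (h' | h') | (h' | h')
    · exact Or.inl h'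
    · exact Or.inr h'
    · exact Or.inl h'.symm
    · exact Or.inr h'.symm
  -- the `none` condition
  have cond2 : ∀ e : (completeExpansion G).edgeSet, page' e = none →
      ∃ a b : IncidencePair G, (e : Sym2 (IncidencePair G)) = s(a, b) ∧
        FPos f M1 a < FPos f M1 b ∧
        ∀ c : IncidencePair G, ¬ (FPos f M1 a < FPos f M1 c ∧ FPos f M1 c < FPos f M1 b) := by
    rintro ⟨e1, he1⟩
    revert he1
    induction' e1 using Sym2.ind with a b
    intro he1 h0
    rw [hpage' a b he1] at h0
    obtain ⟨hab, hor⟩ := hadj he1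
    by_cases hE : a.1.2 = b.1.2
    · -- expanded edge
      rw [hPdef] at h0
      simp only [dif_pos hE] at h0
      cases hpe : page ⟨a.1.2, a.2.1⟩ with
      | some i => rw [hpe] at h0; simp at h0
      | none =>
        obtain ⟨u, w, heq, hlt, hmid⟩ := hnone ⟨a.1.2, a.2.1⟩ hpe
        have hVne : a.1.1 ≠ b.1.1 := fun h => hab (ip_ext h hE)
        have hma : a.1.1 = u ∨ a.1.1 = w := by
          have := a.2.2
          rw [show a.1.2 = s(u, w) from heq] at this
          exact Sym2.mem_iff.mp this
        have hmb : b.1.1 = u ∨ b.1.1 = w := by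
          have := b.2.2
          rw [← hE, show a.1.2 = s(u, w) from heq] at this
          exact Sym2.mem_iff.mp this
        rcases hma with hau | haw
        · have hbw : b.1.1 = w := by
            rcases hmb with h | h
            · exact absurd (hau.trans h.symm) hVne
            · exact h
          obtain ⟨h1, h2⟩ := spine_lemma (G := G) hM hf (e := a.1.2)
            (Prod.ext hau rfl) (Prod.ext hbw hE.symm) hlt hmid
          exact ⟨a, b, rfl, h1, h2⟩
        · have hbu : b.1.1 = u := by
            rcases hmb with h | h
            · exact h
            · exact absurd (haw.trans h.symm) hVne
          obtain ⟨h1, h2⟩ := spine_lemma (G := G) hM hf (e := a.1.2)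
            (Prod.ext hbu hE.symm) (Prod.ext haw rfl) hlt hmid
          exact ⟨b, a, Sym2.eq_swap, h1, h2⟩
    · -- clique edge : never `none`
      have hV : a.1.1 = b.1.1 := by
        rcases hor with h | h
        · exact h
        · exact absurd h hE
      exfalso
      rw [hPdef] at h0
      simp only [dif_neg hE, if_pos hV] at h0
      have hD1 : 0 < G.degree a.1.1 :=
        (SimpleGraph.degree_pos_iff_exists_adj G _).mpr ⟨ipOther a, ipOther_adj a⟩
      have hD2 : G.degree a.1.1 ≤ G.maxDegree := G.degree_le_maxDegree _
      have hmodlt : (rnk f M1 a + rnk f M1 b) % (G.degree a.1.1) < G.degree a.1.1 :=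
        Nat.mod_lt _ hD1
      have hcl : ((rnk f M1 a + rnk f M1 b) % (G.degree a.1.1)) / 2 < q := by omega
      simp only [hmkPage] at h0
      simp only [dif_pos hcl] at h0
      simp at h0
  -- the crossing condition
  have cond3 : ∀ e e' : (completeExpansion G).edgeSet, (page' e).isSome →
      page' e = page' e' →
      ¬ edgesCross (FPos f M1) (e : Sym2 (IncidencePair G)) (e' : Sym2 (IncidencePair G)) := by
    rintro ⟨e1, he1⟩ ⟨e2, he2⟩
    revert he1 he2
    induction' e1 using Sym2.ind with a b
    induction' e2 using Sym2.ind with c d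
    intro he1 he2 hsome heq hcr
    replace hcr : edgesCross (FPos f M1) s(a, b) s(c, d) := hcr
    rw [hpage' a b he1] at hsome heq
    rw [hpage' c d he2] at heq
    obtain ⟨hab, hor1⟩ := hadj he1
    obtain ⟨hcd, hor2⟩ := hadj he2
    by_cases hE1 : a.1.2 = b.1.2 <;> by_cases hE2 : c.1.2 = d.1.2
    · -- expanded / expanded
      rw [hPdef] at hsome heq
      simp only [dif_pos hE1, dif_pos hE2] at hsome heq
      cases hpe : page ⟨a.1.2, a.2.1⟩ with
      | none => rw [hpe] at hsome; simp at hsome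
      | some i =>
      cases hpg : page ⟨c.1.2, c.2.1⟩ with
      | none => rw [hpe, hpg] at heq; simp at heq
      | some j =>
      rw [hpe, hpg] at heq
      simp only [Option.map_some, Option.some_inj] at heq
      have hij : i = j := by
        have := congrArg Fin.val heq
        rw [hemb] at this
        exact Fin.ext this
      have hnc : ¬ edgesCross f a.1.2 c.1.2 := by
        have := hcross ⟨a.1.2, a.2.1⟩ ⟨c.1.2, c.2.1⟩ (by rw [hpe]; rfl)
          (by rw [hpe, hpg, hij])
        exact this
      have hVab : a.1.1 ≠ b.1.1 := fun h => hab (ip_ext h hE1)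
      have hVcd : c.1.1 ≠ d.1.1 := fun h => hcd (ip_ext h hE2)
      by_cases hgg : a.1.2 = c.1.2
      · -- same expanded edge: self-crossing impossible
        have heab : a.1.2 = s(a.1.1, b.1.1) :=
          Sym2.eq_of_ne_mem hVab a.2.2 (hE1 ▸ b.2.2)
            (Sym2.mem_mk_left _ _) (Sym2.mem_mk_right _ _)
        have hcmem : c.1.1 = a.1.1 ∨ c.1.1 = b.1.1 := by
          have := c.2.2
          rw [← hgg, heab] at this
          exact Sym2.mem_iff.mp this
        have hdmem : d.1.1 = a.1.1 ∨ d.1.1 = b.1.1 := by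
          have := d.2.2
          rw [← hE2, ← hgg, heab] at this
          exact Sym2.mem_iff.mp this
        have hca : c = a ∨ c = b := by
          rcases hcmem with h | h
          · exact Or.inl (ip_ext h hgg.symm)
          · exact Or.inr (ip_ext h (hgg.symm.trans hE1))
        have hda : d = a ∨ d = b := by
          rcases hdmem with h | h
          · exact Or.inl (ip_ext h (hE2.symm.trans hgg.symm))
          · exact Or.inr (ip_ext h ((hE2.symm.trans hgg.symm).trans hE1))
        rcases hca with h1 | h1 <;> rcases hda with h2 | h2
        · exact hcd (h1.trans h2.symm)
        · rw [h1, h2] at hcr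
          exact not_edgesCross_self _ _ hcr
        · rw [h1, h2, show s(b, a) = s(a, b) from Sym2.eq_swap] at hcr
          exact not_edgesCross_self _ _ hcr
        · exact hcd (h1.trans h2.symm)
      · obtain ⟨a', b', c', d', heq1, heq2, j1, j2, j3⟩ := hcr
        rcases Sym2.eq_iff.mp heq1 with ⟨h1a, h1b⟩ | ⟨h1a, h1b⟩ <;>
          rcases Sym2.eq_iff.mp heq2 with ⟨h2a, h2b⟩ | ⟨h2a, h2b⟩ <;>
          subst h1a <;> subst h1b <;> subst h2a <;> subst h2b
        · exact cross_exp hM hf rfl hE1.symm rfl hE2.symm hVab hVcd hgg hnc j1 j2 j3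
        · exact cross_exp hM hf rfl hE1.symm hE2.symm rfl hVab hVcd.symm hgg hnc j1 j2 j3
        · exact cross_exp hM hf hE1.symm rfl rfl hE2.symm hVab.symm hVcd hgg hnc j1 j2 j3
        · exact cross_exp hM hf hE1.symm rfl hE2.symm rfl hVab.symm hVcd.symm hgg hnc j1 j2 j3
    · -- expanded / clique : pages differ
      exfalso
      have hV2 : c.1.1 = d.1.1 := by
        rcases hor2 with h | h
        · exact h
        · exact absurd h hE2
      rw [hPdef] at hsome heq
      simp only [dif_pos hE1, dif_neg hE2, if_pos hV2] at hsome heq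
      cases hpe : page ⟨a.1.2, a.2.1⟩ with
      | none => rw [hpe] at hsome; simp at hsome
      | some i =>
      rw [hpe] at heq
      simp only [hmkPage] at heq
      by_cases hcl : ((rnk f M1 c + rnk f M1 d) % (G.degree c.1.1)) / 2 < q
      · simp only [dif_pos hcl, Option.map_some, Option.some_inj] at heq
        have := congrArg Fin.val heq
        rw [hemb] at this
        have hik : i.1 < k := i.2
        simp at this
        omega
      · rw [dif_neg hcl] at heq
        simp at heq
    · -- clique / expanded : pages differ
      exfalso
      have hV1 : a.1.1 = b.1.1 := by
        rcases hor1 with h | h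
        · exact h
        · exact absurd h hE1
      rw [hPdef] at hsome heq
      simp only [dif_neg hE1, dif_pos hE2, if_pos hV1] at hsome heq
      simp only [hmkPage] at hsome heq
      by_cases hcl : ((rnk f M1 a + rnk f M1 b) % (G.degree a.1.1)) / 2 < q
      · simp only [dif_pos hcl] at heq
        cases hpg : page ⟨c.1.2, c.2.1⟩ with
        | none => rw [hpg] at heq; simp at heq
        | some j =>
          rw [hpg] at heq
          simp only [Option.map_some, Option.some_inj] at heq
          have := congrArg Fin.val heq
          rw [hemb] at this
          have hjk : j.1 < k := j.2
          simp at this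
          omega
      · simp only [dif_neg hcl] at hsome
        simp at hsome
    · -- clique / clique
      have hV1 : a.1.1 = b.1.1 := by
        rcases hor1 with h | h
        · exact h
        · exact absurd h hE1
      have hV2 : c.1.1 = d.1.1 := by
        rcases hor2 with h | h
        · exact h
        · exact absurd h hE2
      rw [hPdef] at hsome heq
      simp only [dif_neg hE1, dif_neg hE2, if_pos hV1, if_pos hV2] at hsome heq
      simp only [hmkPage] at hsome heq
      by_cases hcl1 : ((rnk f M1 a + rnk f M1 b) % (G.degree a.1.1)) / 2 < q
      · by_cases hcl2 : ((rnk f M1 c + rnk f M1 d) % (G.degree c.1.1)) / 2 < q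
        · simp only [dif_pos hcl1, dif_pos hcl2, Option.some_inj] at heq
          have hpageq : ((rnk f M1 a + rnk f M1 b) % (G.degree a.1.1)) / 2 =
              ((rnk f M1 c + rnk f M1 d) % (G.degree c.1.1)) / 2 := by
            have := congrArg Fin.val heq
            simp at this
            omega
          by_cases hfv : f a.1.1 = f c.1.1
          · exact clique_cross hM hf hV1 hV2 (hf hfv) hpageq hcr
          · exact sep_lemma hM hV1 hV2 hfv hcr
        · simp only [dif_pos hcl1, dif_neg hcl2] at heq
          simp at heq
      · simp only [dif_neg hcl1] at hsome
        simp at hsome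
  have hmem : HasBookEmbedding (completeExpansion G) (k + q) :=
    ⟨FPos f M1, page', FPos_injective hM hf, cond2, cond3⟩
  rw [pageNumber]
  exact Nat.sInf_le hmem
end

section
/- Let m ≥ 4 be a natural number and let S_{m+1} = K_{1,m} be the star graph with m+1 vertices (one center of degree m and m leaves). Then pn(E_c(S_{m+1})) = ⌈m/2⌉, where E_c denotes the complete expansion graph and pn denotes the pagenumber. -/
open SimpleGraph

lemma core_page (m x1 y1 x2 y2 : ℕ) (h1 : x1 < y1) (h2 : y1 < x2) (h3 : x2 < y2) (h4 : y2 < m)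
    (hp : (x1 + x2) % m / 2 = (y1 + y2) % m / 2) : False := by
  have e1 : (x1 + x2 < m ∧ (x1 + x2) % m = x1 + x2) ∨
      (m ≤ x1 + x2 ∧ (x1 + x2) % m = x1 + x2 - m) := by
    rcases Nat.lt_or_ge (x1 + x2) m with h | h
    · exact Or.inl ⟨h, Nat.mod_eq_of_lt h⟩
    · exact Or.inr ⟨h, by rw [Nat.mod_eq_sub_mod h, Nat.mod_eq_of_lt (by omega)]⟩
  have e2 : (y1 + y2 < m ∧ (y1 + y2) % m = y1 + y2) ∨
      (m ≤ y1 + y2 ∧ (y1 + y2) % m = y1 + y2 - m) := by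
    rcases Nat.lt_or_ge (y1 + y2) m with h | h
    · exact Or.inl ⟨h, Nat.mod_eq_of_lt h⟩
    · exact Or.inr ⟨h, by rw [Nat.mod_eq_sub_mod h, Nat.mod_eq_of_lt (by omega)]⟩
  rcases e1 with ⟨l1, e1⟩ | ⟨l1, e1⟩ <;> rcases e2 with ⟨l2, e2⟩ | ⟨l2, e2⟩ <;>
    rw [e1, e2] at hp <;> omega

/-- Any pairwise non-crossing set of "long" chords with endpoints in `[a,b]`
(including possibly the full chord `(a,b)`) has at most `b - a - 1` elements. -/
lemma diag_bound : ∀ L a b : ℕ, b - a ≤ L → ∀ D : Finset (ℕ × ℕ),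
    (∀ x ∈ D, a ≤ x.1 ∧ x.1 + 2 ≤ x.2 ∧ x.2 ≤ b) →
    (∀ x ∈ D, ∀ y ∈ D, ¬(x.1 < y.1 ∧ y.1 < x.2 ∧ x.2 < y.2)) →
    D.card ≤ b - a - 1 := by
  intro L
  induction L using Nat.strong_induction_on with
  | _ L ih =>
    intro a b hL D hbd hnc
    rcases Nat.lt_or_ge (b - a) 2 with hsmall | hbig
    · -- D is empty
      have : D = ∅ := by
        apply Finset.eq_empty_of_forall_notMem
        intro x hx
        have := hbd x hx
        omega
      simp [this]
    · set D0 := D.erase (a, b) with hD0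
      have hcard : D.card ≤ D0.card + 1 := by
        have : D ⊆ insert (a, b) D0 := by
          intro x hx
          by_cases h : x = (a, b)
          · simp [h]
          · exact Finset.mem_insert_of_mem (Finset.mem_erase.mpr ⟨h, hx⟩)
        calc D.card ≤ (insert (a, b) D0).card := Finset.card_le_card this
          _ ≤ D0.card + 1 := Finset.card_insert_le _ _
      rcases D0.eq_empty_or_nonempty with hemp | hne
      · rw [hemp] at hcard; simp at hcard; omega
      · obtain ⟨⟨i, j⟩, hij, hmax⟩ := D0.exists_max_image (fun x => x.2 - x.1) hne
        have hijD : (i, j) ∈ D := Finset.mem_of_mem_erase hij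
        have hijne : (i, j) ≠ (a, b) := (Finset.mem_erase.mp hij).1
        obtain ⟨hai, hij2, hjb⟩ := hbd _ hijD
        simp only at hai hij2 hjb
        have hijlt : j - i < b - a := by
          rcases Prod.mk.injEq .. ▸ (fun h => hijne h) with _
          have : i ≠ a ∨ j ≠ b := by
            by_contra h
            push_neg at h
            exact hijne (by rw [h.1, h.2])
          omega
        -- classification of elements of D0
        have hclass : ∀ x ∈ D0, (i ≤ x.1 ∧ x.2 ≤ j) ∨ x.2 ≤ i ∨ j ≤ x.1 := by
          intro x hx
          have hxD : x ∈ D := Finset.mem_of_mem_erase hx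
          have hb1 := hbd x hxD
          have hc1 := hnc _ hijD _ hxD
          have hc2 := hnc _ hxD _ hijD
          have hm := hmax x hx
          simp only at *
          omega
        set Din := D0.filter (fun x => i ≤ x.1 ∧ x.2 ≤ j) with hDin
        set Dl := D0.filter (fun x => x.2 ≤ i) with hDl
        set Dr := D0.filter (fun x => j ≤ x.1 ∧ ¬(x.2 ≤ j)) with hDr
        have hsub : D0 ⊆ Din ∪ Dl ∪ Dr := by
          intro x hx
          rcases hclass x hx with h | h | h
          · exact Finset.mem_union_left _ (Finset.mem_union_left _ (Finset.mem_filter.mpr ⟨hx, h⟩))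
          · exact Finset.mem_union_left _ (Finset.mem_union_right _ (Finset.mem_filter.mpr ⟨hx, h⟩))
          · by_cases h2 : x.2 ≤ j
            · have := hbd x (Finset.mem_of_mem_erase hx)
              exact Finset.mem_union_left _ (Finset.mem_union_left _
                (Finset.mem_filter.mpr ⟨hx, by omega, h2⟩))
            · exact Finset.mem_union_right _ (Finset.mem_filter.mpr ⟨hx, h, h2⟩)
        have hin : Din.card ≤ j - i - 1 := by
          apply ih (j - i) (by omega) i j le_rfl
          · intro x hx
            have := Finset.mem_filter.mp hx
            have := hbd x (Finset.mem_of_mem_erase this.1)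
            simp only at *
            omega
          · intro x hx y hy
            exact hnc _ (Finset.mem_of_mem_erase (Finset.mem_filter.mp hx).1)
              _ (Finset.mem_of_mem_erase (Finset.mem_filter.mp hy).1)
        have hl : Dl.card ≤ i - a - 1 := by
          apply ih (i - a) (by omega) a i le_rfl
          · intro x hx
            have h' := Finset.mem_filter.mp hx
            have := hbd x (Finset.mem_of_mem_erase h'.1)
            have := h'.2
            simp only at *
            omega
          · intro x hx y hy
            exact hnc _ (Finset.mem_of_mem_erase (Finset.mem_filter.mp hx).1)
              _ (Finset.mem_of_mem_erase (Finset.mem_filter.mp hy).1)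
        have hr : Dr.card ≤ b - j - 1 := by
          apply ih (b - j) (by omega) j b le_rfl
          · intro x hx
            have h' := Finset.mem_filter.mp hx
            have := hbd x (Finset.mem_of_mem_erase h'.1)
            have := h'.2
            simp only at *
            omega
          · intro x hx y hy
            exact hnc _ (Finset.mem_of_mem_erase (Finset.mem_filter.mp hx).1)
              _ (Finset.mem_of_mem_erase (Finset.mem_filter.mp hy).1)
        have : D0.card ≤ Din.card + Dl.card + Dr.card := by
          calc D0.card ≤ (Din ∪ Dl ∪ Dr).card := Finset.card_le_card hsub
            _ ≤ (Din ∪ Dl).card + Dr.card := Finset.card_union_le _ _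
            _ ≤ Din.card + Dl.card + Dr.card := by
                have := Finset.card_union_le Din Dl
                omega
        omega

lemma diag_bound_sharp (a b : ℕ) (hab : a + 2 ≤ b) (D : Finset (ℕ × ℕ))
    (hbd : ∀ x ∈ D, a ≤ x.1 ∧ x.1 + 2 ≤ x.2 ∧ x.2 ≤ b)
    (hnc : ∀ x ∈ D, ∀ y ∈ D, ¬(x.1 < y.1 ∧ y.1 < x.2 ∧ x.2 < y.2))
    (hfull : (a, b) ∉ D) : D.card ≤ b - a - 2 := by
  have key := diag_bound (b - a) a b le_rfl (insert (a, b) D) ?_ ?_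
  · rw [Finset.card_insert_of_notMem hfull] at key
    omega
  · intro x hx
    rcases Finset.mem_insert.mp hx with h | h
    · simp [h]; omega
    · exact hbd x h
  · intro x hx y hy
    rcases Finset.mem_insert.mp hx with h | h <;> rcases Finset.mem_insert.mp hy with h' | h'
    · subst h h'; intro hcon; simp only at hcon; omega
    · have := hbd y h'; subst h; simp only at *; omega
    · have := hbd x h; subst h'; simp only at *; omega
    · exact hnc x h y h'

namespace Star

variable (m : ℕ)

abbrev SG : SimpleGraph (Fin (m + 1)) := SimpleGraph.fromRel (fun x _ : Fin (m + 1) => x = 0)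

variable {m}

lemma sg_adj {x y : Fin (m + 1)} : (SG m).Adj x y ↔ x ≠ y ∧ (x = 0 ∨ y = 0) := by
  constructor
  · rintro ⟨h1, h2 | h2⟩ <;> exact ⟨h1, by tauto⟩
  · rintro ⟨h1, h2 | h2⟩
    · exact ⟨h1, Or.inl h2⟩
    · exact ⟨h1, Or.inr h2⟩

lemma mem_edgeSet_SG {e : Sym2 (Fin (m + 1))} :
    e ∈ (SG m).edgeSet ↔ ∃ i : Fin (m + 1), i ≠ 0 ∧ e = s(0, i) := by
  induction e using Sym2.ind with
  | _ x y =>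
    rw [SimpleGraph.mem_edgeSet, sg_adj]
    constructor
    · rintro ⟨h1, h2 | h2⟩
      · exact ⟨y, by subst h2; simpa [eq_comm] using h1, by rw [h2]⟩
      · exact ⟨x, by subst h2; simpa [eq_comm] using h1, by rw [h2, Sym2.eq_swap]⟩
    · rintro ⟨i, hi, hie⟩
      rw [Sym2.eq_iff] at hie
      rcases hie with ⟨h1, h2⟩ | ⟨h1, h2⟩
      · exact ⟨by rw [h1, h2]; exact hi.symm, Or.inl h1⟩
      · exact ⟨by rw [h1, h2]; exact hi, Or.inr h2⟩

def leafFun : Sym2 (Fin (m + 1)) → Fin (m + 1) :=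
  Sym2.lift ⟨fun a b => a + b, fun a b => add_comm a b⟩

abbrev W (m : ℕ) := IncidencePair (SG m)

def leaf (p : W m) : Fin (m + 1) := leafFun p.val.2

lemma edge_eq (p : W m) : p.val.2 = s(0, leaf p) ∧ leaf p ≠ 0 := by
  obtain ⟨i, hi, hie⟩ := mem_edgeSet_SG.mp p.2.1
  have : leaf p = i := by simp [leaf, hie, leafFun]
  rw [this]
  exact ⟨hie, hi⟩

lemma fst_cases (p : W m) : p.val.1 = 0 ∨ p.val.1 = leaf p := by
  have h := p.2.2
  rw [(edge_eq p).1] at h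
  rcases Sym2.mem_iff.mp h with h | h
  · exact Or.inl h
  · exact Or.inr h

lemma ce_adj {p q : W m} :
    (completeExpansion (SG m)).Adj p q ↔ p ≠ q ∧ (p.val.1 = q.val.1 ∨ p.val.2 = q.val.2) := by
  rw [completeExpansion, SimpleGraph.fromRel_adj]
  constructor
  · rintro ⟨h1, h2⟩
    refine ⟨h1, ?_⟩
    rcases h2 with (h | h) | (h | h) <;> [exact Or.inl h; exact Or.inr h;
      exact Or.inl h.symm; exact Or.inr h.symm]
  · rintro ⟨h1, h2⟩
    exact ⟨h1, Or.inl h2⟩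

lemma w_ext {p q : W m} (h1 : p.val.1 = q.val.1) (h2 : p.val.2 = q.val.2) : p = q :=
  Subtype.ext (Prod.ext h1 h2)

lemma leaf_eq_iff {p q : W m} : leaf p = leaf q ↔ p.val.2 = q.val.2 := by
  constructor
  · intro h
    rw [(edge_eq p).1, (edge_eq q).1, h]
  · intro h
    simp [leaf, h]

/-! ### Upper bound -/

def fup (p : W m) : ℕ := if p.val.1 = 0 then 2 * (leaf p).val else 2 * (leaf p).val + 1

lemma leaf_pos (p : W m) : 1 ≤ (leaf p).val := by
  by_contra h
  exact (edge_eq p).2 (Fin.ext (by rw [Fin.val_zero]; omega))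

lemma fup_inj : Function.Injective (fup (m := m)) := by
  intro p q h
  unfold fup at h
  by_cases hp : p.val.1 = 0 <;> by_cases hq : q.val.1 = 0 <;>
    [rw [if_pos hp, if_pos hq] at h; rw [if_pos hp, if_neg hq] at h;
     rw [if_neg hp, if_pos hq] at h; rw [if_neg hp, if_neg hq] at h]
  · have hl : leaf p = leaf q := Fin.ext (by omega)
    exact w_ext (by rw [hp, hq]) (leaf_eq_iff.mp hl)
  · omega
  · omega
  · have hl : leaf p = leaf q := Fin.ext (by omega)
    have h2 : p.val.2 = q.val.2 := leaf_eq_iff.mp hl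
    have h1 : p.val.1 = q.val.1 := by
      rcases fst_cases p with e | e
      · exact absurd e hp
      · rcases fst_cases q with e' | e'
        · exact absurd e' hq
        · rw [e, e', hl]
    exact w_ext h1 h2

variable (m) in
def pgfun (hm : 0 < m) (p q : W m) : Option (Fin ((m + 1) / 2)) :=
  if p.val.2 = q.val.2 then none
  else some ⟨(((leaf p).val - 1 + ((leaf q).val - 1)) % m) / 2, by
    have : ((leaf p).val - 1 + ((leaf q).val - 1)) % m < m := Nat.mod_lt _ hm
    omega⟩

lemma pgfun_symm (hm : 0 < m) (p q : W m) : pgfun m hm p q = pgfun m hm q p := by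
  unfold pgfun
  by_cases h : p.val.2 = q.val.2
  · rw [if_pos h, if_pos h.symm]
  · rw [if_neg h, if_neg (Ne.symm h)]
    simp only [Option.some.injEq, Fin.mk.injEq]
    rw [Nat.add_comm ((leaf p).val - 1) ((leaf q).val - 1)]

variable (m) in
def upPage (hm : 0 < m) (e : (completeExpansion (SG m)).edgeSet) : Option (Fin ((m + 1) / 2)) :=
  Sym2.lift ⟨fun p q => pgfun m hm p q, pgfun_symm hm⟩ e.val

lemma fup_center {p : W m} (h : p.val.1 = 0) : fup p = 2 * (leaf p).val := by
  unfold fup; rw [if_pos h]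

lemma fup_leaf {p : W m} (h : p.val.1 ≠ 0) : fup p = 2 * (leaf p).val + 1 := by
  unfold fup; rw [if_neg h]

lemma upper (hm : 4 ≤ m) : HasBookEmbedding (completeExpansion (SG m)) ((m + 1) / 2) := by
  have hm0 : 0 < m := by omega
  refine ⟨fup, upPage m hm0, fup_inj, ?_, ?_⟩
  · -- none edges are pendant, spine-consecutive
    rintro ⟨e, he⟩ hnone
    induction e using Sym2.ind with
    | _ p q =>
      have hadj : (completeExpansion (SG m)).Adj p q := he
      obtain ⟨hne, hor⟩ := ce_adj.mp hadj
      have hpg : pgfun m hm0 p q = none := hnone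
      have h22 : p.val.2 = q.val.2 := by
        by_contra hc
        simp [pgfun, hc] at hpg
      have h11 : p.val.1 ≠ q.val.1 := fun h => hne (w_ext h h22)
      have hl : leaf p = leaf q := leaf_eq_iff.mpr h22
      have hcases : (p.val.1 = 0 ∧ q.val.1 ≠ 0) ∨ (q.val.1 = 0 ∧ p.val.1 ≠ 0) := by
        rcases fst_cases p with e1 | e1 <;> rcases fst_cases q with e2 | e2
        · exact absurd (e1.trans e2.symm) h11
        · exact Or.inl ⟨e1, by rw [e2]; exact (edge_eq q).2⟩
        · exact Or.inr ⟨e2, by rw [e1]; exact (edge_eq p).2⟩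
        · rw [e1, e2, hl] at h11; exact absurd rfl h11
      rcases hcases with ⟨h1, h2⟩ | ⟨h1, h2⟩
      · refine ⟨p, q, rfl, ?_, ?_⟩
        · rw [fup_center h1, fup_leaf h2, hl]; omega
        · intro c
          rw [fup_center h1, fup_leaf h2, hl]; omega
      · refine ⟨q, p, Sym2.eq_swap, ?_, ?_⟩
        · rw [fup_center h1, fup_leaf h2, hl]; omega
        · intro c
          rw [fup_center h1, fup_leaf h2, hl]; omega
  · -- crossing
    rintro e e' hsome heq ⟨a, b, c, d, hab, hcd, h1, h2, h3⟩
    have hadj1 : (completeExpansion (SG m)).Adj a b := by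
      have h := e.2; rw [hab] at h; exact h
    have hadj2 : (completeExpansion (SG m)).Adj c d := by
      have h := e'.2; rw [hcd] at h; exact h
    have hpe : upPage m hm0 e = pgfun m hm0 a b := by
      unfold upPage; rw [show e.val = s(a, b) from hab]; rfl
    have hpe' : upPage m hm0 e' = pgfun m hm0 c d := by
      unfold upPage; rw [show e'.val = s(c, d) from hcd]; rfl
    rw [hpe] at hsome heq
    rw [hpe'] at heq
    have hab2 : a.val.2 ≠ b.val.2 := by
      intro h
      rw [pgfun, if_pos h] at hsome
      simp at hsome
    have hsome' : (pgfun m hm0 c d).isSome := heq ▸ hsome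
    have hcd2 : c.val.2 ≠ d.val.2 := by
      intro h
      rw [pgfun, if_pos h] at hsome'
      simp at hsome'
    -- the four vertices are all centers
    have hcenter : ∀ (x y : W m), x.val.1 = y.val.1 → x.val.2 ≠ y.val.2 →
        x.val.1 = 0 ∧ y.val.1 = 0 := by
      intro x y hxy hne2
      rcases fst_cases x with e1 | e1 <;> rcases fst_cases y with e2 | e2
      · exact ⟨e1, e2⟩
      · exfalso; exact (edge_eq y).2 (by rw [← e2, ← hxy, e1])
      · exfalso; exact (edge_eq x).2 (by rw [← e1, hxy, e2])
      · exfalso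
        exact hne2 (leaf_eq_iff.mp (by rw [← e1, ← e2, hxy]))
    have h11 : a.val.1 = b.val.1 := by
      rcases (ce_adj.mp hadj1).2 with h | h
      · exact h
      · exact absurd h hab2
    have h11' : c.val.1 = d.val.1 := by
      rcases (ce_adj.mp hadj2).2 with h | h
      · exact h
      · exact absurd h hcd2
    obtain ⟨ha0, hb0⟩ := hcenter a b h11 hab2
    obtain ⟨hc0, hd0⟩ := hcenter c d h11' hcd2
    rw [fup_center ha0, fup_center hc0] at h1
    rw [fup_center hc0, fup_center hb0] at h2
    rw [fup_center hb0, fup_center hd0] at h3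
    -- extract page value equality
    rw [pgfun, if_neg hab2, pgfun, if_neg hcd2] at heq
    have hval : ((leaf a).val - 1 + ((leaf b).val - 1)) % m / 2 =
        ((leaf c).val - 1 + ((leaf d).val - 1)) % m / 2 := by
      simpa using heq
    have p1 := leaf_pos a
    have p2 := leaf_pos b
    have p3 := leaf_pos c
    have p4 := leaf_pos d
    have q4 : (leaf d).val < m + 1 := (leaf d).isLt
    exact core_page m ((leaf a).val - 1) ((leaf c).val - 1) ((leaf b).val - 1)
      ((leaf d).val - 1) (by omega) (by omega) (by omega) (by omega) hval

/-! ### Lower bound -/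

variable (m) in
def IC (i : Fin (m + 1)) (hi : i ≠ 0) : W m :=
  ⟨(0, s(0, i)), mem_edgeSet_SG.mpr ⟨i, hi, rfl⟩, Sym2.mem_mk_left 0 i⟩

lemma IC_inj {i j : Fin (m + 1)} {hi : i ≠ 0} {hj : j ≠ 0} (h : IC m i hi = IC m j hj) :
    i = j := by
  have h2 : s(0, i) = s(0, j) := congrArg (fun p => p.val.2) h
  rw [Sym2.eq_iff] at h2
  rcases h2 with ⟨_, h2⟩ | ⟨h2, h3⟩
  · exact h2
  · exact absurd h3 hi

lemma IC_adj {i j : Fin (m + 1)} {hi : i ≠ 0} {hj : j ≠ 0} (hij : i ≠ j) :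
    (completeExpansion (SG m)).Adj (IC m i hi) (IC m j hj) :=
  ce_adj.mpr ⟨fun h => hij (IC_inj h), Or.inl rfl⟩

lemma cardI : Fintype.card {i : Fin (m + 1) // i ≠ 0} = m := by
  simp

lemma lower (hm : 4 ≤ m) (k : ℕ)
    (h : HasBookEmbedding (completeExpansion (SG m)) k) : (m + 1) / 2 ≤ k := by
  have hm0 : 0 < m := by omega
  obtain ⟨f, page, hinj, hnone, hcross⟩ := h
  -- an enumeration of the clique (center) vertices in spine order
  set P : {i : Fin (m + 1) // i ≠ 0} → ℕ := fun i => f (IC m i.1 i.2) with hP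
  have hPinj : Function.Injective P := by
    intro i j hij
    have := hinj hij
    exact Subtype.ext (IC_inj this)
  set s : Finset ℕ := Finset.univ.image P with hsdef
  have hs : s.card = m := by
    rw [hsdef, Finset.card_image_of_injective _ hPinj, Finset.card_univ, cardI]
  set ord := s.orderIsoOfFin hs with hord
  have hex : ∀ a : Fin m, ∃ i, P i = (ord a : ℕ) := by
    intro a
    have hval : (ord a : ℕ) ∈ Finset.univ.image P := (ord a).2
    obtain ⟨i, _, hi⟩ := Finset.mem_image.mp hval
    exact ⟨i, hi⟩
  choose c' hc' using hex
  -- the clique vertex at sorted position n (for n < m)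
  set CV : ℕ → W m := fun n =>
    IC m (c' ⟨n % m, Nat.mod_lt _ hm0⟩).1 (c' ⟨n % m, Nat.mod_lt _ hm0⟩).2 with hCV
  have hfCV : ∀ (n : ℕ) (hn : n < m), f (CV n) = (ord ⟨n, hn⟩ : ℕ) := by
    intro n hn
    have : (⟨n % m, Nat.mod_lt _ hm0⟩ : Fin m) = ⟨n, hn⟩ := Fin.ext (Nat.mod_eq_of_lt hn)
    rw [hCV]
    simp only [this]
    exact hc' _
  have hFmono : ∀ u v : ℕ, u < m → v < m → u < v → f (CV u) < f (CV v) := by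
    intro u v hu hv huv
    rw [hfCV u hu, hfCV v hv]
    have : (⟨u, hu⟩ : Fin m) < ⟨v, hv⟩ := huv
    exact Subtype.coe_lt_coe.mpr (ord.lt_iff_lt.mpr this)
  have hCVne : ∀ u v : ℕ, u < m → v < m → u ≠ v → CV u ≠ CV v := by
    intro u v hu hv huv hc
    rcases Nat.lt_or_ge u v with h' | h'
    · exact absurd (congrArg f hc) (Nat.ne_of_lt (hFmono u v hu hv h'))
    · exact absurd (congrArg f hc) (Nat.ne_of_gt (hFmono v u hv hu (by omega)))
  set EE : ℕ × ℕ → Sym2 (W m) := fun x => s(CV x.1, CV x.2) with hEE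
  have hEEmem : ∀ x : ℕ × ℕ, x.1 < m → x.2 < m → x.1 ≠ x.2 →
      EE x ∈ (completeExpansion (SG m)).edgeSet := by
    intro x h1 h2 h3
    rw [hEE, SimpleGraph.mem_edgeSet]
    exact ce_adj.mpr ⟨hCVne _ _ h1 h2 h3, Or.inl rfl⟩
  classical
  set Pg : Sym2 (W m) → Option (Fin k) := fun e =>
    if h : e ∈ (completeExpansion (SG m)).edgeSet then page ⟨e, h⟩ else none with hPg
  set A : Finset (ℕ × ℕ) :=
    (Finset.range m ×ˢ Finset.range m).filter (fun x => x.1 < x.2) with hA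
  have hmemA : ∀ x : ℕ × ℕ, x ∈ A ↔ x.1 < x.2 ∧ x.2 < m := by
    intro x
    rw [hA, Finset.mem_filter, Finset.mem_product, Finset.mem_range, Finset.mem_range]
    constructor
    · rintro ⟨⟨_, h2⟩, h3⟩; exact ⟨h3, h2⟩
    · rintro ⟨h1, h2⟩; exact ⟨⟨by omega, h2⟩, h1⟩
  -- cardinality of A
  have hAcard : A.card * 2 = m * (m - 1) := by
    have hAeq : A = (Finset.range m).biUnion
        (fun b => (Finset.range b).image (fun a => (a, b))) := by
      ext x
      rw [hmemA, Finset.mem_biUnion]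
      constructor
      · rintro ⟨h1, h2⟩
        exact ⟨x.2, Finset.mem_range.mpr h2, Finset.mem_image.mpr
          ⟨x.1, Finset.mem_range.mpr h1, rfl⟩⟩
      · rintro ⟨b, hb, hx⟩
        obtain ⟨a, ha, hax⟩ := Finset.mem_image.mp hx
        rw [← hax]
        exact ⟨Finset.mem_range.mp ha, Finset.mem_range.mp hb⟩
    rw [hAeq, Finset.card_biUnion]
    · have : ∀ b ∈ Finset.range m, ((Finset.range b).image (fun a => (a, b))).card = b := by
        intro b _
        rw [Finset.card_image_of_injective _ (fun a a' h => (Prod.mk.injEq .. ▸ h).1),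
          Finset.card_range]
      rw [Finset.sum_congr rfl this]
      exact Finset.sum_range_id_mul_two m
    · intro b hb b' hb' hbb'
      rw [Function.onFun, Finset.disjoint_left]
      intro x hx hx'
      obtain ⟨a, _, ha⟩ := Finset.mem_image.mp hx
      obtain ⟨a', _, ha'⟩ := Finset.mem_image.mp hx'
      apply hbb'
      rw [← ha] at ha'
      exact ((Prod.mk.injEq .. ▸ ha').2).symm
  -- hull pairs
  set hull : ℕ × ℕ → Prop := fun x => x.2 = x.1 + 1 ∨ (x.1 = 0 ∧ x.2 = m - 1) with hhull
  have hullcard : (A.filter (fun x => hull x)).card ≤ m := by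
    have hsub : A.filter (fun x => hull x) ⊆
        insert (0, m - 1) ((Finset.range (m - 1)).image (fun a => (a, a + 1))) := by
      intro x hx
      obtain ⟨hxA, hxh⟩ := Finset.mem_filter.mp hx
      obtain ⟨h1, h2⟩ := (hmemA x).mp hxA
      rcases hxh with h | ⟨h3, h4⟩
      · apply Finset.mem_insert_of_mem
        exact Finset.mem_image.mpr ⟨x.1, Finset.mem_range.mpr (by omega),
          by rw [← h]⟩
      · apply Finset.mem_insert.mpr
        left
        ext <;> simp [h3, h4]
    calc (A.filter (fun x => hull x)).card
        ≤ _ := Finset.card_le_card hsub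
      _ ≤ ((Finset.range (m - 1)).image (fun a => (a, a + 1))).card + 1 :=
          Finset.card_insert_le _ _
      _ ≤ (m - 1) + 1 := by
          have := Finset.card_image_le (s := Finset.range (m - 1)) (f := fun a => (a, a + 1))
          rw [Finset.card_range] at this
          omega
      _ ≤ m := by omega
  -- edges with page none are consecutive
  have hnone' : ∀ x ∈ A, Pg (EE x) = none → x.2 = x.1 + 1 := by
    intro x hxA hx
    obtain ⟨h1, h2⟩ := (hmemA x).mp hxA
    have hmem := hEEmem x (by omega) h2 (by omega)
    rw [hPg] at hx
    simp only [dif_pos hmem] at hx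
    obtain ⟨u, v, huv, hfuv, hbet⟩ := hnone ⟨EE x, hmem⟩ hx
    have huv' : EE x = s(u, v) := huv
    rw [hEE] at huv'
    rw [Sym2.eq_iff] at huv'
    rcases huv' with ⟨hu, hv⟩ | ⟨hu, hv⟩
    · by_contra hcon
      have hlt : x.1 + 1 < x.2 := by omega
      have hb := hbet (CV (x.1 + 1))
      rw [← hu, ← hv] at hb
      exact hb ⟨hFmono _ _ (by omega) (by omega) (by omega),
        hFmono _ _ (by omega) (by omega) (by omega)⟩
    · rw [← hu, ← hv] at hfuv
      exact absurd hfuv (by have := hFmono x.1 x.2 (by omega) h2 h1; omega)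
  -- pages are non-crossing
  have hpagecross : ∀ p : Fin k, ∀ x ∈ A, ∀ y ∈ A,
      Pg (EE x) = some p → Pg (EE y) = some p →
      ¬(x.1 < y.1 ∧ y.1 < x.2 ∧ x.2 < y.2) := by
    intro p x hxA y hyA hx hy ⟨hxy1, hxy2, hxy3⟩
    obtain ⟨hx1, hx2⟩ := (hmemA x).mp hxA
    obtain ⟨hy1, hy2⟩ := (hmemA y).mp hyA
    have hmemx := hEEmem x (by omega) hx2 (by omega)
    have hmemy := hEEmem y (by omega) hy2 (by omega)
    rw [hPg] at hx hy
    simp only [dif_pos hmemx] at hx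
    simp only [dif_pos hmemy] at hy
    apply hcross ⟨EE x, hmemx⟩ ⟨EE y, hmemy⟩ (by rw [hx]; rfl) (by rw [hx, hy])
    exact ⟨CV x.1, CV x.2, CV y.1, CV y.2, rfl, rfl,
      hFmono _ _ (by omega) (by omega) hxy1,
      hFmono _ _ (by omega) (by omega) hxy2,
      hFmono _ _ (by omega) (by omega) hxy3⟩
  -- per-page bound
  have hpage : ∀ p : Fin k,
      (A.filter (fun x => ¬ hull x ∧ Pg (EE x) = some p)).card ≤ m - 3 := by
    intro p
    have key := diag_bound_sharp 0 (m - 1) (by omega)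
      (A.filter (fun x => ¬ hull x ∧ Pg (EE x) = some p)) ?_ ?_ ?_
    · omega
    · intro x hx
      obtain ⟨hxA, hxh, _⟩ := Finset.mem_filter.mp hx
      obtain ⟨h1, h2⟩ := (hmemA x).mp hxA
      simp only [hhull] at hxh
      push_neg at hxh
      constructor
      · omega
      · constructor
        · have := hxh.1; omega
        · omega
    · intro x hx y hy
      obtain ⟨hxA, _, hxp⟩ := Finset.mem_filter.mp hx
      obtain ⟨hyA, _, hyp⟩ := Finset.mem_filter.mp hy
      exact hpagecross p x hxA y hyA hxp hyp
    · intro hc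
      obtain ⟨hcA, hch, _⟩ := Finset.mem_filter.mp hc
      simp only [hhull] at hch
      exact hch (Or.inr ⟨by trivial, by trivial⟩)
  -- covering
  have hcover : A.filter (fun x => ¬ hull x) ⊆
      Finset.univ.biUnion (fun p : Fin k =>
        A.filter (fun x => ¬ hull x ∧ Pg (EE x) = some p)) := by
    intro x hx
    obtain ⟨hxA, hxh⟩ := Finset.mem_filter.mp hx
    have : Pg (EE x) ≠ none := by
      intro hn
      apply hxh
      simp only [hhull]
      exact Or.inl (hnone' x hxA hn)
    obtain ⟨p, hp⟩ := Option.ne_none_iff_exists'.mp this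
    exact Finset.mem_biUnion.mpr ⟨p, Finset.mem_univ p,
      Finset.mem_filter.mpr ⟨hxA, hxh, hp⟩⟩
  have hnonhull : (A.filter (fun x => ¬ hull x)).card ≤ k * (m - 3) := by
    calc (A.filter (fun x => ¬ hull x)).card
        ≤ _ := Finset.card_le_card hcover
      _ ≤ ∑ p : Fin k, (A.filter (fun x => ¬ hull x ∧ Pg (EE x) = some p)).card :=
          Finset.card_biUnion_le
      _ ≤ ∑ _p : Fin k, (m - 3) := Finset.sum_le_sum (fun p _ => hpage p)
      _ = k * (m - 3) := by rw [Finset.sum_const, Finset.card_univ, Fintype.card_fin,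
          smul_eq_mul]
  have hsplit : A.card ≤ m + k * (m - 3) := by
    have := Finset.card_filter_add_card_filter_not (s := A) (p := fun x => hull x)
    omega
  -- final arithmetic
  have hfinal : m * (m - 1) ≤ (m + k * (m - 3)) * 2 := by
    rw [← hAcard]
    exact Nat.mul_le_mul_right 2 hsplit
  have hkey : m ≤ 2 * k := by
    by_contra hk
    push_neg at hk
    obtain ⟨t, ht⟩ : ∃ t, m = t + 3 := ⟨m - 3, by omega⟩
    have ht1 : 1 ≤ t := by omega
    have h2k : 2 * k ≤ t + 2 := by omega
    have hb : 2 * (k * t) ≤ (t + 2) * t := by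
      calc 2 * (k * t) = (2 * k) * t := by ring
        _ ≤ (t + 2) * t := Nat.mul_le_mul_right t h2k
    have hchain : t * t + 5 * t + 6 ≤ 2 * t + 6 + (t * t + 2 * t) := by
      calc t * t + 5 * t + 6 = (t + 3) * ((t + 3) - 1) := by
            have : (t + 3) - 1 = t + 2 := by omega
            rw [this]; ring
        _ ≤ ((t + 3) + k * ((t + 3) - 3)) * 2 := by rw [← ht]; exact hfinal
        _ = 2 * (t + 3) + 2 * (k * t) := by
            have : (t + 3) - 3 = t := by omega
            rw [this]; ring
        _ ≤ 2 * (t + 3) + (t + 2) * t := by omega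
        _ = 2 * t + 6 + (t * t + 2 * t) := by ring
    linarith
  omega

end Star

theorem stmt8 (m : ℕ) (hm : 4 ≤ m) :
    pageNumber (completeExpansion
      (SimpleGraph.fromRel (fun x _ : Fin (m + 1) => x = 0))) = (m + 1) / 2 := by
  apply le_antisymm
  · exact Nat.sInf_le (Star.upper hm)
  · exact le_csInf ⟨_, Star.upper hm⟩ (fun k hk => Star.lower hm k hk)
end

section
/- Let T be a finite tree (a finite connected acyclic simple graph). Then pn(E_c(T)) ≤ ⌈Δ(T)/2⌉, where E_c denotes the complete expansion graph, Δ(T) is the maximum degree of T, and pn denotes the pagenumber. -/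
open SimpleGraph

/-! ### Auxiliary material -/

namespace StmtAux

/-! #### List lemmas -/

lemma lex_append {α : Type*} [LinearOrder α] :
    ∀ (l t : List α), t ≠ [] → List.Lex (· < ·) l (l ++ t)
  | [], t, ht => by cases t with
    | nil => exact absurd rfl ht
    | cons a t => exact List.Lex.nil
  | a :: l, t, ht => List.Lex.cons (lex_append l t ht)

lemma lex_of_prefix_ne {l₁ l₂ : List ℕ} (h : l₁ <+: l₂) (hne : l₁ ≠ l₂) : l₁ < l₂ := by
  obtain ⟨t, rfl⟩ := h
  have ht : t ≠ [] := by rintro rfl; simp at hne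
  exact lex_append l₁ t ht

lemma prefix_of_between : ∀ {p b c : List ℕ}, p <+: c → p ≤ b → b ≤ c → p <+: b
  | [], b, c, _, _, _ => List.nil_prefix
  | a :: p, b, c, hpc, h1, h2 => by
    obtain ⟨t, rfl⟩ := hpc
    cases b with
    | nil => exact absurd h1 (not_le.2 (show ([] : List ℕ) < a :: p from List.Lex.nil))
    | cons x b =>
      rcases lt_or_eq_of_le h1 with h1 | h1
      · rcases lt_or_eq_of_le h2 with h2 | h2
        · have h1' : List.Lex (· < ·) (a :: p) (x :: b) := h1
          have h2' : List.Lex (· < ·) (x :: b) (a :: p ++ t) := h2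
          cases h1' with
          | cons h1'' =>
            cases h2' with
            | cons h2'' =>
              obtain ⟨t', rfl⟩ :=
                prefix_of_between (List.prefix_append p t) (le_of_lt h1'') (le_of_lt h2'')
              exact ⟨t', rfl⟩
            | rel h => exact absurd h (lt_irrefl _)
          | rel hax =>
            cases h2' with
            | cons h2'' => exact absurd hax (lt_irrefl _)
            | rel hxa => exact absurd (hax.trans hxa) (lt_irrefl _)
        · rw [h2]; exact List.prefix_append _ _
      · rw [← h1]

/-! #### Arithmetic lemmas -/

lemma div2_strict {x y : ℕ} (h : x + 2 ≤ y) : x / 2 < y / 2 := by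
  have : (x + 2) / 2 ≤ y / 2 := Nat.div_le_div_right h
  rw [Nat.add_div_right x (by norm_num)] at this
  omega

lemma clique_pages {d i j k l : ℕ} (hik : i < k) (hkj : k < j) (hjl : j < l) (hld : l < d)
    (hpage : ((i + j) % d) / 2 = ((k + l) % d) / 2) : False := by
  set A := i + j with hA
  set B := k + l with hB
  have hAB : A + 2 ≤ B := by omega
  have hBA : B + 2 ≤ A + d := by omega
  have hA2 : A < 2 * d := by omega
  have hB2 : B < 2 * d := by omega
  rcases lt_or_ge A d with hAd | hAd
  · rw [Nat.mod_eq_of_lt hAd] at hpage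
    rcases lt_or_ge B d with hBd | hBd
    · rw [Nat.mod_eq_of_lt hBd] at hpage
      exact absurd hpage (Nat.ne_of_lt (div2_strict hAB))
    · rw [Nat.mod_eq_sub_mod hBd, Nat.mod_eq_of_lt (by omega)] at hpage
      have : (B - d) + 2 ≤ A := by omega
      exact absurd hpage.symm (Nat.ne_of_lt (div2_strict this))
  · have hBd : d ≤ B := by omega
    rw [Nat.mod_eq_sub_mod hAd, Nat.mod_eq_of_lt (by omega),
      Nat.mod_eq_sub_mod hBd, Nat.mod_eq_of_lt (by omega)] at hpage
    have : (A - d) + 2 ≤ B - d := by omega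
    exact absurd hpage (Nat.ne_of_lt (div2_strict this))

/-! #### Ranks -/

noncomputable def rkIn {β : Type*} [Fintype β] (s : Finset β) (f : β → ℕ) (x : β) : ℕ :=
  (s.filter (fun t => f t < f x)).card

lemma rk_lt_rk {β : Type*} [Fintype β] {s : Finset β} {f : β → ℕ} {x y : β}
    (hx : x ∈ s) (h : f x < f y) : rkIn s f x < rkIn s f y := by
  classical
  apply Finset.card_lt_card
  constructor
  · intro t ht
    simp only [Finset.mem_filter] at ht ⊢
    exact ⟨ht.1, ht.2.trans h⟩
  · intro hsub
    have := hsub (Finset.mem_filter.2 ⟨hx, h⟩)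
    simp at this

lemma rk_lt_card {β : Type*} [Fintype β] {s : Finset β} {f : β → ℕ} {x : β}
    (hx : x ∈ s) : rkIn s f x < s.card := by
  classical
  exact Finset.card_lt_card
    ⟨Finset.filter_subset _ _, fun hsub => by simpa using (hsub hx)⟩

/-! #### Rho and subtrees -/

section Rho
variable {V : Type*} [Fintype V]

noncomputable def gV (V : Type*) [Fintype V] : V → ℕ := fun v => ((Fintype.equivFin V) v : ℕ)

lemma gV_inj : Function.Injective (gV V) := by
  intro a b h
  exact (Fintype.equivFin V).injective (Fin.val_injective h)

noncomputable def rho (K : V → List ℕ) (v : V) : ℕ :=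
  (Finset.univ.filter (fun u => K u < K v)).card

variable {K : V → List ℕ} (hK : Function.Injective K)

lemma rho_strictMono {u v : V} (h : K u < K v) : rho K u < rho K v := by
  classical
  apply Finset.card_lt_card
  constructor
  · intro t ht
    simp only [Finset.mem_filter] at ht ⊢
    exact ⟨ht.1, ht.2.trans h⟩
  · intro hsub
    have := hsub (Finset.mem_filter.2 ⟨Finset.mem_univ u, h⟩)
    simp at this

include hK in
lemma rho_lt_iff {u v : V} : rho K u < rho K v ↔ K u < K v := by
  constructor
  · intro h
    rcases lt_trichotomy (K u) (K v) with h' | h' | h'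
    · exact h'
    · exact absurd (congrArg (rho K) (hK h')) (Nat.ne_of_lt h)
    · exact absurd (rho_strictMono h') (by omega)
  · exact rho_strictMono

include hK in
lemma rho_le_iff {u v : V} : rho K u ≤ rho K v ↔ K u ≤ K v := by
  rw [← not_lt, ← not_lt, not_iff_not]
  exact rho_lt_iff hK

include hK in
lemma rho_inj : Function.Injective (rho K) := by
  intro a b h
  by_contra hne
  have hKne : K a ≠ K b := fun h' => hne (hK h')
  rcases hKne.lt_or_gt with h' | h'
  · exact absurd (rho_strictMono h') (by omega)
  · exact absurd (rho_strictMono h') (by omega)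

/-- max of `rho` over the subtree (prefix-extension set) of `u` -/
noncomputable def Mv (K : V → List ℕ) (u : V) : ℕ :=
  (Finset.univ.filter (fun w => K u <+: K w)).sup (rho K)

lemma le_Mv {u w : V} (h : K u <+: K w) : rho K w ≤ Mv K u :=
  Finset.le_sup (Finset.mem_filter.2 ⟨Finset.mem_univ _, h⟩)

include hK in
lemma rho_lt_of_sub {u w : V} (h : K u <+: K w) (hne : w ≠ u) : rho K u < rho K w :=
  rho_strictMono (lex_of_prefix_ne h (fun h' => hne (hK h'.symm)))

include hK in
/-- outside the subtree of `u`, ranks avoid the interval `[rho u, Mv u]` -/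
lemma outside_subtree {u w : V} (h : ¬ K u <+: K w) :
    rho K w < rho K u ∨ Mv K u < rho K w := by
  by_contra hcon
  push_neg at hcon
  obtain ⟨h1, h2⟩ := hcon
  have hne : (Finset.univ.filter (fun w => K u <+: K w)).Nonempty :=
    ⟨u, Finset.mem_filter.2 ⟨Finset.mem_univ _, List.prefix_refl _⟩⟩
  obtain ⟨m, hm, hm2⟩ := Finset.exists_mem_eq_sup _ hne (rho K)
  have hmu : K u <+: K m := (Finset.mem_filter.1 hm).2
  have hwm : rho K w ≤ rho K m := by rw [← hm2]; exact h2
  exact h (prefix_of_between hmu ((rho_le_iff hK).1 h1) ((rho_le_iff hK).1 hwm))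

end Rho

/-! #### Trees: root paths -/

section Tree
variable {V : Type*} {T : SimpleGraph V}

noncomputable def rt (hT : T.IsTree) : V := @Classical.arbitrary V hT.isConnected.nonempty

noncomputable def pt (hT : T.IsTree) (v : V) : T.Walk (rt hT) v :=
  (hT.existsUnique_path (rt hT) v).choose

lemma pt_isPath (hT : T.IsTree) (v : V) : (pt hT v).IsPath :=
  (hT.existsUnique_path (rt hT) v).choose_spec.1

lemma pt_unique (hT : T.IsTree) {v : V} (q : T.Walk (rt hT) v) (hq : q.IsPath) : q = pt hT v :=
  (hT.existsUnique_path (rt hT) v).choose_spec.2 q hq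

noncomputable def Lv (hT : T.IsTree) (v : V) : List V := (pt hT v).support

lemma Lv_ne_nil (hT : T.IsTree) (v : V) : Lv hT v ≠ [] := SimpleGraph.Walk.support_ne_nil _

lemma Lv_getLast (hT : T.IsTree) (v : V) : (Lv hT v).getLast (Lv_ne_nil hT v) = v :=
  SimpleGraph.Walk.getLast_support _

lemma Lv_injective (hT : T.IsTree) : Function.Injective (Lv hT) := by
  intro u v h
  have hu := Lv_getLast hT u
  have hv := Lv_getLast hT v
  rw [← hu, ← hv]
  congr 1

/-- key structural lemma: along an edge, one root-path extends the other by one vertex. -/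
lemma Lv_adj (hT : T.IsTree) {u v : V} (hadj : T.Adj u v) :
    Lv hT v = Lv hT u ++ [v] ∨ Lv hT u = Lv hT v ++ [u] := by
  classical
  set p := pt hT u with hp
  by_cases hv : v ∈ p.support
  · right
    have hq : (p.takeUntil v hv).IsPath := (pt_isPath hT u).takeUntil hv
    have hqv : p.takeUntil v hv = pt hT v := pt_unique hT _ hq
    have huv : u ≠ v := hadj.ne
    have hu_not : u ∉ (p.takeUntil v hv).support := by
      intro hu
      have hspec := SimpleGraph.Walk.take_spec p hv
      have hnodup : p.support.Nodup := (pt_isPath hT u).support_nodup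
      have hsupp : p.support
          = (p.takeUntil v hv).support ++ (p.dropUntil v hv).support.tail := by
        conv_lhs => rw [← hspec]
        rw [SimpleGraph.Walk.support_append]
      rw [hsupp] at hnodup
      rw [List.nodup_append] at hnodup
      have hu_tail : u ∈ (p.dropUntil v hv).support.tail := by
        have hmem : u ∈ (p.dropUntil v hv).support := SimpleGraph.Walk.end_mem_support _
        rw [SimpleGraph.Walk.support_eq_cons] at hmem
        rcases List.mem_cons.1 hmem with h | h
        · exact absurd h huv
        · exact h
      exact hnodup.2.2 u hu u hu_tail rfl
    have hconc : ((p.takeUntil v hv).concat hadj.symm).IsPath := by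
      rw [SimpleGraph.Walk.isPath_def, SimpleGraph.Walk.support_concat]
      rw [List.nodup_append]
      exact ⟨hq.support_nodup, List.nodup_singleton _, fun a ha b hb hab => hu_not (by
        rw [List.mem_singleton] at hb; rw [hab, hb] at ha; exact ha)⟩
    have heq := pt_unique hT _ hconc
    rw [← hp] at heq
    calc Lv hT u = ((p.takeUntil v hv).concat hadj.symm).support := by rw [heq]; rfl
    _ = (p.takeUntil v hv).support ++ [u] := by
        rw [SimpleGraph.Walk.support_concat]
    _ = Lv hT v ++ [u] := by rw [hqv]; rfl
  · left
    have hconc : (p.concat hadj).IsPath := by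
      rw [SimpleGraph.Walk.isPath_def, SimpleGraph.Walk.support_concat]
      rw [List.nodup_append]
      exact ⟨(pt_isPath hT u).support_nodup, List.nodup_singleton _, fun a ha b hb hab => hv (by
        rw [List.mem_singleton] at hb; rw [hab, hb] at ha; exact ha)⟩
    have heq := pt_unique hT _ hconc
    calc Lv hT v = ((p.concat hadj)).support := by rw [heq]; rfl
    _ = p.support ++ [v] := by rw [SimpleGraph.Walk.support_concat]
    _ = Lv hT u ++ [v] := rfl

end Tree

/-! #### Keys for tree vertices -/

section Incidence
variable {V : Type*} [Fintype V] {T : SimpleGraph V}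

noncomputable def Kv (hT : T.IsTree) (v : V) : List ℕ := (Lv hT v).map (gV V)

lemma Kv_inj (hT : T.IsTree) : Function.Injective (Kv hT) := fun a b h =>
  Lv_injective hT (List.map_injective_iff.2 gV_inj h)

noncomputable instance : Fintype (IncidencePair T) := Fintype.ofFinite _

noncomputable def ow (x : IncidencePair T) : V := Sym2.Mem.other x.2.2

lemma ow_spec (x : IncidencePair T) : s(x.1.1, ow x) = x.1.2 := Sym2.other_spec _

lemma ow_adj (x : IncidencePair T) : T.Adj x.1.1 (ow x) := by
  rw [← SimpleGraph.mem_edgeSet, ow_spec]; exact x.2.1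

lemma ow_ne (x : IncidencePair T) : ow x ≠ x.1.1 :=
  Sym2.other_ne (T.not_isDiag_of_mem_edgeSet x.2.1) _

variable (hT : T.IsTree)

noncomputable def fI (hT : T.IsTree) (x : IncidencePair T) : ℕ :=
  if (Lv hT (ow x)).length < (Lv hT x.1.1).length then 2 * rho (Kv hT) x.1.1 + 1
  else 2 * rho (Kv hT) (ow x)

lemma fI_spec (x : IncidencePair T) :
    (fI hT x = 2 * rho (Kv hT) x.1.1 + 1 ∧ Kv hT x.1.1 = Kv hT (ow x) ++ [gV V x.1.1]) ∨
    (fI hT x = 2 * rho (Kv hT) (ow x) ∧ Kv hT (ow x) = Kv hT x.1.1 ++ [gV V (ow x)]) := by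
  rcases Lv_adj hT (ow_adj x) with h | h
  · right
    have hlen : ¬ (Lv hT (ow x)).length < (Lv hT x.1.1).length := by
      rw [h]; simp
    exact ⟨by rw [fI, if_neg hlen], by simp [Kv, h]⟩
  · left
    have hlen : (Lv hT (ow x)).length < (Lv hT x.1.1).length := by
      rw [h]; simp
    exact ⟨by rw [fI, if_pos hlen], by simp [Kv, h]⟩

lemma same_edge {x y : IncidencePair T} (he : x.1.2 = y.1.2) (hne : x ≠ y) :
    y.1.1 = ow x := by
  have hy : y.1.1 ∈ x.1.2 := he ▸ y.2.2
  rw [← ow_spec x] at hy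
  rcases Sym2.mem_iff.1 hy with h | h
  · exfalso
    apply hne
    apply Subtype.ext
    exact Prod.ext h.symm he
  · exact h

lemma matching_consec {x y : IncidencePair T} (he : x.1.2 = y.1.2) (hne : x ≠ y) :
    fI hT x = fI hT y + 1 ∨ fI hT y = fI hT x + 1 := by
  have hyx : y.1.1 = ow x := same_edge he hne
  have hxy : x.1.1 = ow y := same_edge he.symm hne.symm
  rcases fI_spec hT x with ⟨hfx, hKx⟩ | ⟨hfx, hKx⟩ <;>
    rcases fI_spec hT y with ⟨hfy, hKy⟩ | ⟨hfy, hKy⟩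
  · -- both child sides: contradiction on lengths
    exfalso
    rw [← hyx] at hKx
    rw [← hxy] at hKy
    have := congrArg List.length hKx
    have := congrArg List.length hKy
    simp at *
    omega
  · -- x child, y parent
    left
    rw [hfx, hfy, ← hxy]
  · right
    rw [hfx, hfy, ← hyx]
  · exfalso
    rw [← hyx] at hKx
    rw [← hxy] at hKy
    have := congrArg List.length hKx
    have := congrArg List.length hKy
    simp at *
    omega

lemma fI_inj : Function.Injective (fI hT) := by
  intro x y h
  have hrho := rho_inj (Kv_inj hT)
  rcases fI_spec hT x with ⟨hfx, hKx⟩ | ⟨hfx, hKx⟩ <;>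
    rcases fI_spec hT y with ⟨hfy, hKy⟩ | ⟨hfy, hKy⟩
  · -- both child-side
    rw [hfx, hfy] at h
    have hv : x.1.1 = y.1.1 := hrho (by omega)
    rw [hv] at hKx
    rw [hKy] at hKx
    have how : ow x = ow y := Kv_inj hT (by
      have hd := congrArg List.dropLast hKx
      rw [List.dropLast_concat, List.dropLast_concat] at hd
      exact hd.symm)
    apply Subtype.ext
    apply Prod.ext hv
    rw [← ow_spec x, ← ow_spec y, hv, how]
  · -- parity contradiction
    rw [hfx, hfy] at h
    omega
  · rw [hfx, hfy] at h
    omega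
  · -- both parent-side
    rw [hfx, hfy] at h
    have hc : ow x = ow y := hrho (by omega)
    rw [hc] at hKx
    rw [hKy] at hKx
    have hv : x.1.1 = y.1.1 := Kv_inj hT (by
      have hd := congrArg List.dropLast hKx
      rw [List.dropLast_concat, List.dropLast_concat] at hd
      exact hd.symm)
    apply Subtype.ext
    apply Prod.ext hv
    rw [← ow_spec x, ← ow_spec y, hv, hc]

lemma fI_bounds {u : V} (y : IncidencePair T) (hu : y.1.1 = u) :
    2 * rho (Kv hT) u + 1 ≤ fI hT y ∧ fI hT y ≤ 2 * Mv (Kv hT) u + 1 := by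
  subst hu
  rcases fI_spec hT y with ⟨hfy, hKy⟩ | ⟨hfy, hKy⟩
  · constructor
    · omega
    · have := le_Mv (K := Kv hT) (List.prefix_refl (Kv hT y.1.1))
      omega
  · have hpre : Kv hT y.1.1 <+: Kv hT (ow y) := ⟨_, hKy.symm⟩
    have hne0 : ow y ≠ y.1.1 := ow_ne y
    have h1 := rho_lt_of_sub (Kv_inj hT) hpre hne0
    have h2 := le_Mv (K := Kv hT) hpre
    omega

lemma fI_outside {u v : V} (x : IncidencePair T) (hv : x.1.1 = v)
    (hvu : ¬ Kv hT u <+: Kv hT v) :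
    fI hT x ≤ 2 * rho (Kv hT) u + 1 ∨ 2 * Mv (Kv hT) u + 2 ≤ fI hT x := by
  subst hv
  rcases fI_spec hT x with ⟨hfx, hKx⟩ | ⟨hfx, hKx⟩
  · rcases outside_subtree (Kv_inj hT) hvu with h | h <;> omega
  · set c := ow x with hc
    by_cases hsub : Kv hT u <+: Kv hT c
    · rw [hKx] at hsub
      rcases List.prefix_concat_iff.1 hsub with h | h
      · have : u = c := Kv_inj hT (by rw [h, ← hKx])
        subst this
        omega
      · exact absurd h hvu
    · rcases outside_subtree (Kv_inj hT) hsub with h | h <;> omega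

end Incidence

/-! #### Pages -/

section Pages
variable {V : Type*} [Fintype V] {T : SimpleGraph V} [DecidableRel T.Adj]

open Classical in
noncomputable def cliq (T : SimpleGraph V) (v : V) : Finset (IncidencePair T) :=
  Finset.univ.filter (fun t => t.1.1 = v)

lemma mem_cliq {v : V} {t : IncidencePair T} : t ∈ cliq T v ↔ t.1.1 = v := by
  simp [cliq]

lemma cliq_card (v : V) : (cliq T v).card = T.degree v := by
  classical
  rw [← SimpleGraph.card_incidenceFinset_eq_degree]
  apply Finset.card_bij (fun t _ => t.1.2)
  · intro t ht
    rw [SimpleGraph.mem_incidenceFinset]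
    exact ⟨t.2.1, (mem_cliq.1 ht) ▸ t.2.2⟩
  · intro a ha b hb h
    exact Subtype.ext (Prod.ext (by rw [mem_cliq.1 ha, mem_cliq.1 hb]) h)
  · intro e he
    rw [SimpleGraph.mem_incidenceFinset] at he
    exact ⟨⟨(v, e), he.1, he.2⟩, mem_cliq.2 rfl, rfl⟩

variable (hT : T.IsTree)

noncomputable def rkC (hT : T.IsTree) (x : IncidencePair T) : ℕ :=
  rkIn (cliq T x.1.1) (fI hT) x

open Classical in
noncomputable def pv (hT : T.IsTree) (x y : IncidencePair T) : ℕ :=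
  if x.1.2 = y.1.2 then 0
  else ((rkC hT x + rkC hT y) % (max (cliq T x.1.1).card (cliq T y.1.1).card)) / 2

lemma pv_symm (x y : IncidencePair T) : pv hT x y = pv hT y x := by
  unfold pv
  by_cases h : x.1.2 = y.1.2
  · rw [if_pos h, if_pos h.symm]
  · rw [if_neg h, if_neg (fun h' => h h'.symm), Nat.add_comm, Nat.max_comm]

lemma pv_of_ne {x y : IncidencePair T} (h : x.1.2 ≠ y.1.2) :
    pv hT x y
      = ((rkC hT x + rkC hT y) % (max (cliq T x.1.1).card (cliq T y.1.1).card)) / 2 := by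
  rw [pv, if_neg h]

noncomputable def pageFun (hT : T.IsTree) : Sym2 (IncidencePair T) → ℕ :=
  Sym2.lift ⟨pv hT, pv_symm hT⟩

lemma pageFun_mk (x y : IncidencePair T) : pageFun hT s(x, y) = pv hT x y :=
  Sym2.lift_mk _ _ _

lemma pageFun_bound {E : Sym2 (IncidencePair T)} (hE : E ∈ (completeExpansion T).edgeSet) :
    pageFun hT E < (T.maxDegree + 1) / 2 := by
  induction E using Sym2.ind with
  | _ x y =>
    rw [SimpleGraph.mem_edgeSet] at hE
    simp only [completeExpansion, SimpleGraph.fromRel_adj] at hE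
    have hdeg1 : 1 ≤ T.degree x.1.1 := (T.degree_pos_iff_exists_adj _).2 ⟨ow x, ow_adj x⟩
    have hDel : 1 ≤ T.maxDegree := le_trans hdeg1 (T.degree_le_maxDegree _)
    rw [pageFun_mk]
    by_cases h : x.1.2 = y.1.2
    · rw [pv, if_pos h]
      omega
    · rw [pv_of_ne hT h]
      have hv : x.1.1 = y.1.1 := by
        rcases hE.2 with (h' | h') | (h' | h')
        exacts [h', absurd h' h, h'.symm, absurd h'.symm h]
      rw [hv, max_self]
      have hD : (cliq T y.1.1).card = T.degree y.1.1 := cliq_card _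
      have hDpos : 1 ≤ (cliq T y.1.1).card := by
        rw [hD]
        exact (T.degree_pos_iff_exists_adj _).2 ⟨ow y, ow_adj y⟩
      have hDDel : (cliq T y.1.1).card ≤ T.maxDegree := by
        rw [hD]; exact T.degree_le_maxDegree _
      have hmod : (rkC hT x + rkC hT y) % (cliq T y.1.1).card ≤ T.maxDegree - 1 := by
        have := Nat.mod_lt (rkC hT x + rkC hT y) hDpos
        omega
      calc ((rkC hT x + rkC hT y) % (cliq T y.1.1).card) / 2
          ≤ (T.maxDegree - 1) / 2 := Nat.div_le_div_right hmod
        _ < (T.maxDegree + 1) / 2 := div2_strict (by omega)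

end Pages

end StmtAux

open StmtAux

theorem stmt9 {V : Type*} [Fintype V] (T : SimpleGraph V) [DecidableRel T.Adj]
    (hT : T.IsTree) :
    pageNumber (completeExpansion T) ≤ (T.maxDegree + 1) / 2 := by
  classical
  apply Nat.sInf_le
  show HasBookEmbedding _ _
  refine ⟨fI hT, fun E => some ⟨pageFun hT E.1, pageFun_bound hT E.2⟩, fI_inj hT, ?_, ?_⟩
  · intro e h
    simp at h
  · intro E E' _ hpage hcross
    obtain ⟨a, b, c, d, hE, hE', h1, h2, h3⟩ := hcross
    rw [Option.some_inj] at hpage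
    have hpq : pageFun hT E.1 = pageFun hT E'.1 := congrArg Fin.val hpage
    rw [hE, hE', pageFun_mk, pageFun_mk] at hpq
    have hab := (SimpleGraph.mem_edgeSet _).1 (hE ▸ E.2)
    have hcd := (SimpleGraph.mem_edgeSet _).1 (hE' ▸ E'.2)
    simp only [completeExpansion, SimpleGraph.fromRel_adj] at hab hcd
    by_cases heab : a.1.2 = b.1.2
    · rcases matching_consec hT heab hab.1 with h | h <;> omega
    by_cases hecd : c.1.2 = d.1.2
    · rcases matching_consec hT hecd hcd.1 with h | h <;> omega
    have hvab : a.1.1 = b.1.1 := by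
      rcases hab.2 with (h' | h') | (h' | h')
      exacts [h', absurd h' heab, h'.symm, absurd h'.symm heab]
    have hvcd : c.1.1 = d.1.1 := by
      rcases hcd.2 with (h' | h') | (h' | h')
      exacts [h', absurd h' hecd, h'.symm, absurd h'.symm hecd]
    rw [pv_of_ne hT heab, pv_of_ne hT hecd] at hpq
    by_cases hvu : a.1.1 = c.1.1
    · -- same clique
      set s := cliq T a.1.1 with hs
      have hma : a ∈ s := mem_cliq.2 rfl
      have hmb : b ∈ s := mem_cliq.2 hvab.symm
      have hmc : c ∈ s := mem_cliq.2 hvu.symm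
      have hmd : d ∈ s := mem_cliq.2 (hvcd.symm.trans hvu.symm)
      have hra : rkC hT a = rkIn s (fI hT) a := rfl
      have hrb : rkC hT b = rkIn s (fI hT) b := by rw [rkC, ← hvab]
      have hrc : rkC hT c = rkIn s (fI hT) c := by rw [rkC, ← hvu]
      have hrd : rkC hT d = rkIn s (fI hT) d := by rw [rkC, ← hvcd, ← hvu]
      have hcab : (cliq T b.1.1).card = s.card := by rw [← hvab]
      have hccd : (cliq T c.1.1).card = s.card := by rw [← hvu]
      have hcdd : (cliq T d.1.1).card = s.card := by rw [← hvcd, ← hvu]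
      rw [hra, hrb, hrc, hrd, hcab, hccd, hcdd, max_self] at hpq
      exact clique_pages (rk_lt_rk hma h1) (rk_lt_rk hmc h2) (rk_lt_rk hmb h3)
        (rk_lt_card hmd) hpq
    · -- different cliques: separation
      have hanti : ¬ Kv hT c.1.1 <+: Kv hT a.1.1 ∨ ¬ Kv hT a.1.1 <+: Kv hT c.1.1 := by
        by_contra hcon
        push_neg at hcon
        have hlen := le_antisymm hcon.1.length_le hcon.2.length_le
        exact hvu (Kv_inj hT (hcon.2.eq_of_length hlen.symm))
      rcases hanti with hanti | hanti
      · -- b is strictly between c and d, all of c,d in clique of u := c.1.1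
        have hb := fI_outside hT b rfl (by rw [← hvab]; exact hanti)
        have hc := fI_bounds hT c rfl
        have hd := fI_bounds hT d hvcd.symm
        omega
      · -- c strictly between a and b
        have hc := fI_outside hT c rfl hanti
        have ha := fI_bounds hT a rfl
        have hb := fI_bounds hT b hvab.symm
        omega
end

section
/- Let T be a finite tree (a finite connected acyclic simple graph) with maximum degree Δ(T) ≥ 4. Then pn(E_c(T)) = ⌈Δ(T)/2⌉, where E_c denotes the complete expansion graph and pn denotes the pagenumber. -/
open SimpleGraph

set_option linter.unusedVariables false

lemma ce_adj {V : Type*} (G : SimpleGraph V) {x y : IncidencePair G} :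
    (completeExpansion G).Adj x y ↔
      x ≠ y ∧ ((x : V × Sym2 V).1 = (y : V × Sym2 V).1 ∨ (x : V × Sym2 V).2 = (y : V × Sym2 V).2) := by
  rw [completeExpansion, fromRel_adj]
  constructor
  · rintro ⟨h, h' | h'⟩
    · exact ⟨h, h'⟩
    · exact ⟨h, h'.imp Eq.symm Eq.symm⟩
  · rintro ⟨h, h'⟩
    exact ⟨h, Or.inl h'⟩



section ListLex
variable {α : Type*} [LinearOrder α]

lemma lex_append_cons : ∀ (l : List α) (b : α) (u : List α), List.Lex (· < ·) l (l ++ b :: u)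
  | [], b, u => List.Lex.nil
  | _ :: t, b, u => List.Lex.cons (lex_append_cons t b u)

lemma lex_of_prefix {l₁ l₂ : List α} (h : l₁ <+: l₂) :
    l₁ = l₂ ∨ List.Lex (· < ·) l₁ l₂ := by
  obtain ⟨s, hs⟩ := h
  cases s with
  | nil => exact Or.inl (by simp [← hs])
  | cons b u => exact Or.inr (hs ▸ lex_append_cons l₁ b u)

lemma cons_lex_cons_iff {a b : α} {l₁ l₂ : List α} :
    List.Lex (· < ·) (a :: l₁) (b :: l₂) ↔ a < b ∨ (a = b ∧ List.Lex (· < ·) l₁ l₂) := by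
  constructor
  · intro h
    cases h with
    | cons h => exact Or.inr ⟨rfl, h⟩
    | rel h => exact Or.inl h
  · rintro (h | ⟨rfl, h⟩)
    · exact List.Lex.rel h
    · exact List.Lex.cons h

/-- block property of prefixes in lex order -/
lemma prefix_of_lex_between : ∀ {P A B C : List α}, P <+: A → P <+: C →
    (A = B ∨ List.Lex (· < ·) A B) → (B = C ∨ List.Lex (· < ·) B C) → P <+: B := by
  intro P
  induction P with
  | nil => intro A B C _ _ _ _; exact List.nil_prefix
  | cons p P' ih =>
    rintro A B C ⟨sA, hA⟩ ⟨sC, hC⟩ hAB hBC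
    subst hA hC
    rcases hAB with rfl | hAB
    · exact ⟨sA, rfl⟩
    rcases hBC with rfl | hBC
    · exact ⟨sC, rfl⟩
    cases B with
    | nil => exact absurd hAB (fun h => nomatch h)
    | cons b B' =>
      rw [List.cons_append, cons_lex_cons_iff] at hAB hBC
      rcases hAB with h1 | ⟨e1, hAB⟩
      · rcases hBC with h2 | ⟨e2, hBC⟩
        · exact absurd (h1.trans h2) (lt_irrefl _)
        · exact absurd (e2 ▸ h1) (lt_irrefl _)
      · rcases hBC with h2 | ⟨e2, hBC⟩
        · exact absurd (e1 ▸ h2) (lt_irrefl _)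
        · obtain ⟨s, hs⟩ := ih (A := P' ++ sA) (B := B') (C := P' ++ sC) ⟨sA, rfl⟩ ⟨sC, rfl⟩
            (Or.inr hAB) (Or.inr hBC)
          exact ⟨s, by rw [e1, List.cons_append, hs]⟩

end ListLex

section Laminar

/-- bound for laminar families of sets of size ≥ 2 -/
lemma laminar_card_le (F : Finset (Finset ℕ)) : ∀ (G : Finset ℕ),
    (∀ A ∈ F, A ⊆ G ∧ 2 ≤ A.card) →
    (∀ A ∈ F, ∀ B ∈ F, A ⊆ B ∨ B ⊆ A ∨ Disjoint A B) →
    F.card ≤ G.card - 2 + (if G ∈ F then 1 else 0) := by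
  induction F using Finset.strongInduction with
  | _ F ih =>
    intro G hsub hlam
    rcases F.eq_empty_or_nonempty with rfl | hne
    · simp
    -- choose M : G if G ∈ F else a maximal-cardinality element
    by_cases hGF : G ∈ F
    · -- M = G
      have hFe : F.erase G ⊂ F := Finset.erase_ssubset hGF
      have h1 := ih _ hFe G (fun A hA => hsub A (Finset.mem_of_mem_erase hA))
        (fun A hA B hB => hlam A (Finset.mem_of_mem_erase hA) B (Finset.mem_of_mem_erase hB))
      rw [if_neg (Finset.notMem_erase _ _)] at h1
      have := Finset.card_erase_of_mem hGF
      simp only [if_pos hGF]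
      omega
    · -- pick max-card element M
      obtain ⟨M, hM, hMmax⟩ := F.exists_max_image (fun A => A.card) hne
      have hMG : M ⊆ G := (hsub M hM).1
      have hM2 : 2 ≤ M.card := (hsub M hM).2
      -- split F.erase M into inside-M and outside
      set Fin' := (F.erase M).filter (fun A => A ⊆ M) with hFin
      set Fout := (F.erase M).filter (fun A => ¬ A ⊆ M) with hFout
      have hsplit : (F.erase M).card = Fin'.card + Fout.card := by
        rw [hFin, hFout]; exact (Finset.card_filter_add_card_filter_not _).symm
      have hcard : F.card = 1 + Fin'.card + Fout.card := by
        have := Finset.card_erase_of_mem hM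
        have hpos : 0 < F.card := Finset.card_pos.mpr hne
        omega
      -- Fout sets are disjoint from M hence ⊆ G \ M
      have hFoutsub : ∀ A ∈ Fout, A ⊆ G \ M ∧ 2 ≤ A.card := by
        intro A hA
        rw [hFout, Finset.mem_filter] at hA
        obtain ⟨hA', hAnsub⟩ := hA
        have hAF := Finset.mem_of_mem_erase hA'
        have hdisj : Disjoint A M := by
          rcases hlam A hAF M hM with h | h | h
          · exact absurd h hAnsub
          · -- M ⊆ A: then card A ≥ card M, but M max, so A = M, contradiction with erase
            have : A = M := by
              have h1 := hMmax A hAF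
              have := Finset.eq_of_subset_of_card_le h h1
              exact this.symm
            exact absurd this (Finset.ne_of_mem_erase hA')
          · exact h
        refine ⟨fun x hx => Finset.mem_sdiff.mpr ⟨(hsub A hAF).1 hx, ?_⟩, (hsub A hAF).2⟩
        exact fun hxM => (Finset.disjoint_left.mp hdisj) hx hxM
      have hFinsub : ∀ A ∈ Fin', A ⊆ M ∧ 2 ≤ A.card := by
        intro A hA
        rw [hFin, Finset.mem_filter] at hA
        exact ⟨hA.2, (hsub A (Finset.mem_of_mem_erase hA.1)).2⟩
      have hFinss : Fin' ⊂ F := by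
        refine Finset.ssubset_of_subset_of_ssubset ?_ (Finset.erase_ssubset hM)
        rw [hFin]; exact Finset.filter_subset _ _
      have hFoutss : Fout ⊂ F := by
        refine Finset.ssubset_of_subset_of_ssubset ?_ (Finset.erase_ssubset hM)
        rw [hFout]; exact Finset.filter_subset _ _
      have lamsub : ∀ (S : Finset (Finset ℕ)), S ⊆ F → ∀ A ∈ S, ∀ B ∈ S, A ⊆ B ∨ B ⊆ A ∨ Disjoint A B :=
        fun S hS A hA B hB => hlam A (hS hA) B (hS hB)
      have h1 := ih Fin' hFinss M hFinsub (lamsub _ (subset_of_ssubset hFinss))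
      have h2 := ih Fout hFoutss (G \ M) hFoutsub (lamsub _ (subset_of_ssubset hFoutss))
      have hMne : M ∉ Fin' := by
        rw [hFin]; intro h; exact Finset.notMem_erase M F ((Finset.mem_filter.mp h).1)
      rw [if_neg hMne] at h1
      have hGM : (G \ M).card = G.card - M.card := Finset.card_sdiff_of_subset hMG
      have hGMF : G \ M ∈ Fout → 2 ≤ (G \ M).card := by
        intro h; exact (hFoutsub _ h).2
      have hMcard : M.card ≤ G.card := Finset.card_le_card hMG
      have hMlt : M.card < G.card := by
        rcases lt_or_eq_of_le hMcard with h | h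
        · exact h
        · exact absurd (Finset.eq_of_subset_of_card_le hMG (le_of_eq h.symm)) (fun he => hGF (he ▸ hM))
      rw [if_neg hGF]
      by_cases hgm : G \ M ∈ Fout
      · rw [if_pos hgm] at h2
        have h3 := hGMF hgm
        omega
      · rw [if_neg hgm] at h2
        omega

end Laminar


lemma arith_lower (n k : ℕ) (hn : 4 ≤ n) (h : n.choose 2 ≤ k * (n-3) + 1 + (n-1)) :
    (n+1)/2 ≤ k := by
  by_contra hcon
  have hk : n ≥ 2*k + 1 := by omega
  have heven : Even (n * (n-1)) := by
    have := Nat.even_mul_succ_self (n-1)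
    have he : (n-1) + 1 = n := by omega
    rw [he] at this
    rwa [mul_comm]
  have hch : 2 * n.choose 2 = n * (n - 1) := by
    rw [Nat.choose_two_right]
    exact Nat.mul_div_cancel' heven.two_dvd
  have h2 : n * (n-1) ≤ 2*k*(n-3) + 2 + 2*(n-1) := by
    calc n * (n-1) = 2 * n.choose 2 := hch.symm
    _ ≤ 2 * (k * (n-3) + 1 + (n-1)) := by omega
    _ = 2*k*(n-3) + 2 + 2*(n-1) := by ring
  have h3 : 2*k*(n-3) ≤ (n-1)*(n-3) := Nat.mul_le_mul_right _ (by omega)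
  have h4 : n * (n-1) ≤ (n-1)*(n-3) + 2 + 2*(n-1) := by omega
  obtain ⟨m, rfl⟩ : ∃ m, n = m + 4 := ⟨n - 4, by omega⟩
  have e0 : m + 4 - 1 = m + 3 := rfl
  have e0' : m + 4 - 3 = m + 1 := rfl
  rw [e0, e0'] at h4
  have c1 : (m+4)*(m+3) = m*m+7*m+12 := by ring
  have c2 : (m+3)*(m+1) = m*m+4*m+3 := by ring
  rw [c1, c2] at h4
  linarith

lemma chord_laminar (P : Finset ℕ) (a b c d : ℕ)
    (h1 : ¬(a < c ∧ c < b ∧ b < d)) (h2 : ¬(c < a ∧ a < d ∧ d < b)) :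
    P.filter (fun t => a ≤ t ∧ t < b) ⊆ P.filter (fun t => c ≤ t ∧ t < d) ∨
    P.filter (fun t => c ≤ t ∧ t < d) ⊆ P.filter (fun t => a ≤ t ∧ t < b) ∨
    Disjoint (P.filter (fun t => a ≤ t ∧ t < b)) (P.filter (fun t => c ≤ t ∧ t < d)) := by
  by_cases g1 : c ≤ a ∧ b ≤ d
  · left
    intro t ht
    simp only [Finset.mem_filter] at ht ⊢
    exact ⟨ht.1, by omega⟩
  by_cases g2 : a ≤ c ∧ d ≤ b
  · right; left
    intro t ht
    simp only [Finset.mem_filter] at ht ⊢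
    exact ⟨ht.1, by omega⟩
  · right; right
    rw [Finset.disjoint_left]
    intro t ht ht'
    simp only [Finset.mem_filter] at ht ht'
    omega

lemma nat_convex_eq_Ico (S : Finset ℕ) (hne : S.Nonempty)
    (hconv : ∀ a ∈ S, ∀ c ∈ S, ∀ b, a ≤ b → b ≤ c → b ∈ S) :
    S = Finset.Ico (S.min' hne) (S.min' hne + S.card) := by
  have h1 : S = Finset.Icc (S.min' hne) (S.max' hne) := by
    apply Finset.Subset.antisymm
    · intro t ht
      rw [Finset.mem_Icc]
      exact ⟨S.min'_le t ht, S.le_max' t ht⟩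
    · intro t ht
      rw [Finset.mem_Icc] at ht
      exact hconv _ (S.min'_mem hne) _ (S.max'_mem hne) t ht.1 ht.2
  have hmm : S.min' hne ≤ S.max' hne := S.min'_le _ (S.max'_mem hne)
  have h2 : S.card = S.max' hne - S.min' hne + 1 := by
    conv_lhs => rw [h1]
    rw [Nat.card_Icc]
    omega
  conv_lhs => rw [h1]
  ext t
  rw [Finset.mem_Icc, Finset.mem_Ico, h2]
  omega

lemma lower_bound {V : Type*} [Fintype V] (T : SimpleGraph V) [DecidableRel T.Adj]
    (hT : T.IsTree) (hΔ : 4 ≤ T.maxDegree) (k : ℕ)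
    (h : HasBookEmbedding (completeExpansion T) k) : (T.maxDegree + 1) / 2 ≤ k := by
  classical
  obtain ⟨f, page, hinj, hnone, hcross⟩ := h
  have hne : Nonempty V := hT.isConnected.nonempty
  obtain ⟨v, hv⟩ := T.exists_maximal_degree_vertex
  set n := T.maxDegree with hn
  have hn4 : 4 ≤ n := hΔ
  -- the clique at v
  set C : Finset (IncidencePair T) :=
    Finset.univ.filter (fun x => (x : V × Sym2 V).1 = v) with hC
  have hmemC : ∀ x : IncidencePair T, x ∈ C ↔ (x : V × Sym2 V).1 = v := by
    intro x; simp [hC]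
  have hCcard : C.card = n := by
    rw [hv, ← T.card_incidenceFinset_eq_degree]
    apply Finset.card_bij (fun (x : IncidencePair T) _ => (x : V × Sym2 V).2)
    · intro x hx
      rw [hmemC] at hx
      rw [mem_incidenceFinset]
      exact ⟨x.2.1, hx ▸ x.2.2⟩
    · intro x hx y hy hxy
      rw [hmemC] at hx hy
      exact Subtype.ext (Prod.ext (hx.trans hy.symm) hxy)
    · intro e he
      rw [mem_incidenceFinset] at he
      exact ⟨⟨(v, e), he.1, he.2⟩, (hmemC _).mpr rfl, rfl⟩
  -- positions
  set P : Finset ℕ := C.image f with hP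
  have hPcard : P.card = n := by
    rw [hP, Finset.card_image_of_injective _ hinj, hCcard]
  have hPne : P.Nonempty := by
    rw [← Finset.card_pos, hPcard]; omega
  set maxP := P.max' hPne with hmaxP
  set ground := P.erase maxP with hground
  have hgcard : ground.card = n - 1 := by
    rw [hground, Finset.card_erase_of_mem (P.max'_mem hPne), hPcard]
  -- choice of representatives for 2-subsets of C
  set PC := C.powersetCard 2 with hPC
  have hPCcard : PC.card = n.choose 2 := by
    rw [hPC, Finset.card_powersetCard, hCcard]
  have repX : ∀ A : Finset (IncidencePair T), ∃ q : IncidencePair T × IncidencePair T,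
      A ∈ PC → (A = {q.1, q.2} ∧ q.1 ∈ C ∧ q.2 ∈ C ∧ f q.1 < f q.2) := by
    intro A
    by_cases hA : A ∈ PC
    · rw [hPC, Finset.mem_powersetCard] at hA
      obtain ⟨hsub, hcard⟩ := hA
      obtain ⟨x, y, hxy, rfl⟩ := Finset.card_eq_two.mp hcard
      have hx : x ∈ C := hsub (by simp)
      have hy : y ∈ C := hsub (by simp)
      have hfne : f x ≠ f y := fun e => hxy (hinj e)
      rcases lt_or_gt_of_ne hfne with hlt | hlt
      · exact ⟨(x, y), fun _ => ⟨rfl, hx, hy, hlt⟩⟩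
      · exact ⟨(y, x), fun _ => ⟨Finset.pair_comm x y, hy, hx, hlt⟩⟩
    · obtain ⟨w, hw⟩ : ∃ w, T.Adj v w := by
        have : 0 < T.degree v := by omega
        rw [← T.card_neighborFinset_eq_degree, Finset.card_pos] at this
        obtain ⟨w, hw⟩ := this
        exact ⟨w, (T.mem_neighborFinset v w).mp hw⟩
      have z : IncidencePair T := ⟨(v, s(v, w)), T.mem_edgeSet.mpr hw, Sym2.mem_mk_left _ _⟩
      exact ⟨(z, z), fun hmem => absurd hmem hA⟩
  set X : Finset (IncidencePair T) → IncidencePair T × IncidencePair T :=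
    fun A => Classical.choose (repX A) with hXdef
  have hX : ∀ A ∈ PC, A = {(X A).1, (X A).2} ∧ (X A).1 ∈ C ∧ (X A).2 ∈ C ∧ f (X A).1 < f (X A).2 :=
    fun A hA => Classical.choose_spec (repX A) hA
  -- adjacency, edges
  have hadj : ∀ A ∈ PC, (completeExpansion T).Adj (X A).1 (X A).2 := by
    intro A hA
    obtain ⟨_, h1, h2, h3⟩ := hX A hA
    rw [ce_adj]
    refine ⟨fun e => absurd (congrArg f e) (ne_of_lt h3), Or.inl ?_⟩
    rw [(hmemC _).mp h1, (hmemC _).mp h2]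
  have hEdge : ∀ A ∈ PC, s((X A).1, (X A).2) ∈ (completeExpansion T).edgeSet := by
    intro A hA
    rw [mem_edgeSet]
    exact hadj A hA
  -- nonconsecutive pairs
  set NCp : Finset (IncidencePair T) → Prop :=
    fun A => ∃ z ∈ C, f (X A).1 < f z ∧ f z < f (X A).2 with hNCp
  set NC := PC.filter NCp with hNC
  set CONS := PC.filter (fun A => ¬ NCp A) with hCONS
  have hsplitPC : NC.card + CONS.card = PC.card := by
    rw [hNC, hCONS]
    exact Finset.card_filter_add_card_filter_not _
  -- CONS is small
  have hCONScard : CONS.card ≤ n - 1 := by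
    rw [← hgcard]
    apply Finset.card_le_card_of_injOn (fun A => f (X A).1)
    · intro A hA
      rw [Finset.mem_coe, hCONS, Finset.mem_filter] at hA
      obtain ⟨hA, hAc⟩ := hA
      obtain ⟨hrep, h1, h2, h3⟩ := hX A hA
      rw [Finset.mem_coe, hground, Finset.mem_erase]
      beta_reduce
      have hm1 : f (X A).1 ∈ P := by rw [hP]; exact Finset.mem_image_of_mem f h1
      have hm2 : f (X A).2 ∈ P := by rw [hP]; exact Finset.mem_image_of_mem f h2
      have : f (X A).2 ≤ maxP := P.le_max' _ hm2
      exact ⟨by omega, hm1⟩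
    · intro A hA B hB hfeq
      rw [Finset.mem_coe, hCONS, Finset.mem_filter] at hA hB
      obtain ⟨hA, hAc⟩ := hA
      obtain ⟨hB, hBc⟩ := hB
      obtain ⟨hrepA, hA1, hA2, hA3⟩ := hX A hA
      obtain ⟨hrepB, hB1, hB2, hB3⟩ := hX B hB
      simp only at hfeq
      have h1 : (X A).1 = (X B).1 := hinj hfeq
      have h2 : f (X A).2 = f (X B).2 := by
        by_contra hne2
        rcases lt_or_gt_of_ne hne2 with hlt | hlt
        · exact hBc ⟨(X A).2, hA2, by omega⟩
        · exact hAc ⟨(X B).2, hB2, by omega⟩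
      have h2' : (X A).2 = (X B).2 := hinj h2
      rw [hrepA, hrepB, h1, h2']
  -- page assignment on pair-sets
  set pg : Finset (IncidencePair T) → Option (Fin k) :=
    fun A => if h : s((X A).1, (X A).2) ∈ (completeExpansion T).edgeSet
      then page ⟨_, h⟩ else none with hpg
  have hpgNC : ∀ A, ∀ hA : A ∈ PC, pg A = page ⟨_, hEdge A hA⟩ := by
    intro A hA
    rw [hpg]
    exact dif_pos (hEdge A hA)
  have hsome : ∀ A ∈ NC, (pg A).isSome := by
    intro A hANC
    have hA : A ∈ PC := Finset.mem_of_mem_filter A hANC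
    have hAc : NCp A := (Finset.mem_filter.mp hANC).2
    rw [Option.isSome_iff_ne_none]
    intro hnone'
    rw [hpgNC A hA] at hnone'
    obtain ⟨a, b, hab, hfab, hbet⟩ := hnone (⟨_, hEdge A hA⟩) hnone'
    obtain ⟨z, hz, hz1, hz2⟩ := hAc
    obtain ⟨hrep, h1, h2, h3⟩ := hX A hA
    simp only at hab
    rw [Sym2.eq_iff] at hab
    rcases hab with ⟨rfl, rfl⟩ | ⟨rfl, rfl⟩
    · exact hbet z ⟨hz1, hz2⟩
    · omega
  -- the chord map
  set θ : Finset (IncidencePair T) → Finset ℕ :=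
    fun A => P.filter (fun t => f (X A).1 ≤ t ∧ t < f (X A).2) with hθ
  have hθinj : ∀ A ∈ NC, ∀ B ∈ NC, θ A = θ B → A = B := by
    intro A hANC B hBNC hθeq
    have hA : A ∈ PC := Finset.mem_of_mem_filter A hANC
    have hB : B ∈ PC := Finset.mem_of_mem_filter B hBNC
    obtain ⟨hrepA, hA1, hA2, hA3⟩ := hX A hA
    obtain ⟨hrepB, hB1, hB2, hB3⟩ := hX B hB
    have hmA1 : f (X A).1 ∈ θ A := by
      rw [hθ, Finset.mem_filter]
      exact ⟨by rw [hP]; exact Finset.mem_image_of_mem f hA1, le_refl _, hA3⟩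
    have hmB1 : f (X B).1 ∈ θ B := by
      rw [hθ, Finset.mem_filter]
      exact ⟨by rw [hP]; exact Finset.mem_image_of_mem f hB1, le_refl _, hB3⟩
    have hminA : ∀ t ∈ θ A, f (X A).1 ≤ t := by
      intro t ht; rw [hθ, Finset.mem_filter] at ht; exact ht.2.1
    have hminB : ∀ t ∈ θ B, f (X B).1 ≤ t := by
      intro t ht; rw [hθ, Finset.mem_filter] at ht; exact ht.2.1
    have h1 : f (X A).1 = f (X B).1 := by
      have := hminB _ (hθeq ▸ hmA1)
      have := hminA _ (hθeq.symm ▸ hmB1)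
      omega
    have h2 : f (X A).2 = f (X B).2 := by
      by_contra hne2
      have hmA2 : f (X A).2 ∈ P := by rw [hP]; exact Finset.mem_image_of_mem f hA2
      have hmB2 : f (X B).2 ∈ P := by rw [hP]; exact Finset.mem_image_of_mem f hB2
      rcases lt_or_gt_of_ne hne2 with hlt | hlt
      · have : f (X A).2 ∈ θ B := by
          rw [hθ, Finset.mem_filter]
          exact ⟨hmA2, by omega, hlt⟩
        rw [← hθeq, hθ, Finset.mem_filter] at this
        omega
      · have : f (X B).2 ∈ θ A := by
          rw [hθ, Finset.mem_filter]
          exact ⟨hmB2, by omega, hlt⟩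
        rw [hθeq, hθ, Finset.mem_filter] at this
        omega
    rw [hrepA, hrepB, hinj h1, hinj h2]
  -- fiberwise count
  have hfib : NC.card = ∑ o : Option (Fin k), (NC.filter (fun A => pg A = o)).card :=
    Finset.card_eq_sum_card_fiberwise (fun A _ => Finset.mem_univ _)
  have hnonefib : NC.filter (fun A => pg A = none) = ∅ := by
    rw [Finset.filter_eq_empty_iff]
    intro A hA hnone'
    have := hsome A hA
    rw [hnone'] at this
    simp at this
  have hperpage : ∀ p : Fin k, (NC.filter (fun A => pg A = some p)).card ≤
      n - 3 + (if ground ∈ (NC.filter (fun A => pg A = some p)).image θ then 1 else 0) := by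
    intro p
    set Fp := NC.filter (fun A => pg A = some p) with hFp
    have hFpNC : Fp ⊆ NC := Finset.filter_subset _ _
    have hinjθ : Set.InjOn θ Fp := fun A hA B hB e =>
      hθinj A (hFpNC (Finset.mem_coe.mp hA)) B (hFpNC (Finset.mem_coe.mp hB)) e
    have hcards : Fp.card = (Fp.image θ).card := (Finset.card_image_of_injOn hinjθ).symm
    have hsub : ∀ S ∈ Fp.image θ, S ⊆ ground ∧ 2 ≤ S.card := by
      intro S hS
      obtain ⟨A, hAFp, rfl⟩ := Finset.mem_image.mp hS
      have hANC : A ∈ NC := hFpNC hAFp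
      have hA : A ∈ PC := Finset.mem_of_mem_filter A hANC
      have hAc : NCp A := (Finset.mem_filter.mp hANC).2
      obtain ⟨z, hz, hz1, hz2⟩ := hAc
      obtain ⟨hrep, h1, h2, h3⟩ := hX A hA
      have hm2 : f (X A).2 ∈ P := by rw [hP]; exact Finset.mem_image_of_mem f h2
      have hle : f (X A).2 ≤ maxP := P.le_max' _ hm2
      constructor
      · intro t ht
        rw [hθ, Finset.mem_filter] at ht
        rw [hground, Finset.mem_erase]
        exact ⟨by omega, ht.1⟩
      · have hpair : ({f (X A).1, f z} : Finset ℕ) ⊆ θ A := by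
          intro t ht
          rw [Finset.mem_insert, Finset.mem_singleton] at ht
          rw [hθ, Finset.mem_filter]
          rcases ht with rfl | rfl
          · exact ⟨by rw [hP]; exact Finset.mem_image_of_mem f h1, le_refl _, h3⟩
          · exact ⟨by rw [hP]; exact Finset.mem_image_of_mem f hz, by omega, by omega⟩
        have := Finset.card_le_card hpair
        rwa [Finset.card_pair (by omega : f (X A).1 ≠ f z)] at this
    have hlam : ∀ S1 ∈ Fp.image θ, ∀ S2 ∈ Fp.image θ, S1 ⊆ S2 ∨ S2 ⊆ S1 ∨ Disjoint S1 S2 := by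
      intro S1 hS1 S2 hS2
      obtain ⟨A, hAFp, rfl⟩ := Finset.mem_image.mp hS1
      obtain ⟨B, hBFp, rfl⟩ := Finset.mem_image.mp hS2
      have hA : A ∈ PC := Finset.mem_of_mem_filter A (hFpNC hAFp)
      have hB : B ∈ PC := Finset.mem_of_mem_filter B (hFpNC hBFp)
      have hpgA : pg A = some p := (Finset.mem_filter.mp hAFp).2
      have hpgB : pg B = some p := (Finset.mem_filter.mp hBFp).2
      have hpageA : page ⟨_, hEdge A hA⟩ = some p := by rw [← hpgNC A hA]; exact hpgA
      have hpageB : page ⟨_, hEdge B hB⟩ = some p := by rw [← hpgNC B hB]; exact hpgB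
      apply chord_laminar
      · rintro ⟨c1, c2, c3⟩
        exact hcross ⟨_, hEdge A hA⟩ ⟨_, hEdge B hB⟩
          (by rw [hpageA]; rfl) (by rw [hpageA, hpageB])
          ⟨(X A).1, (X A).2, (X B).1, (X B).2, rfl, rfl, c1, c2, c3⟩
      · rintro ⟨c1, c2, c3⟩
        exact hcross ⟨_, hEdge B hB⟩ ⟨_, hEdge A hA⟩
          (by rw [hpageB]; rfl) (by rw [hpageB, hpageA])
          ⟨(X B).1, (X B).2, (X A).1, (X A).2, rfl, rfl, c1, c2, c3⟩
    have lam := laminar_card_le (Fp.image θ) ground hsub hlam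
    rw [← hcards, hgcard] at lam
    omega
  have huniq : ∀ p q : Fin k,
      ground ∈ (NC.filter (fun A => pg A = some p)).image θ →
      ground ∈ (NC.filter (fun A => pg A = some q)).image θ → p = q := by
    intro p q hp hq
    obtain ⟨A, hAFp, hA⟩ := Finset.mem_image.mp hp
    obtain ⟨B, hBFq, hB⟩ := Finset.mem_image.mp hq
    have hAB : A = B := hθinj A (Finset.mem_of_mem_filter A hAFp |> fun _ => Finset.filter_subset _ _ hAFp)
      B (Finset.filter_subset _ _ hBFq) (hA.trans hB.symm)
    have h1 : pg A = some p := (Finset.mem_filter.mp hAFp).2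
    have h2 : pg B = some q := (Finset.mem_filter.mp hBFq).2
    rw [hAB, h2] at h1
    exact (Option.some_inj.mp h1).symm
  have hNCbound : NC.card ≤ k * (n - 3) + 1 := by
    have hsum : ∑ o : Option (Fin k), (NC.filter (fun A => pg A = o)).card =
        (NC.filter (fun A => pg A = none)).card
          + ∑ p : Fin k, (NC.filter (fun A => pg A = some p)).card := by
      exact Fintype.sum_option _
    have hindsum : ∑ p : Fin k,
        (if ground ∈ (NC.filter (fun A => pg A = some p)).image θ then 1 else 0) ≤ 1 := by
      have : ∑ p : Fin k,
          (if ground ∈ (NC.filter (fun A => pg A = some p)).image θ then 1 else 0)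
          = (Finset.univ.filter
              (fun p : Fin k => ground ∈ (NC.filter (fun A => pg A = some p)).image θ)).card := by
        rw [Finset.card_filter]
      rw [this]
      apply Finset.card_le_one.mpr
      intro p hp q hq
      rw [Finset.mem_filter] at hp hq
      exact huniq p q hp.2 hq.2
    calc NC.card = _ := hfib
    _ = (NC.filter (fun A => pg A = none)).card
          + ∑ p : Fin k, (NC.filter (fun A => pg A = some p)).card := hsum
    _ = ∑ p : Fin k, (NC.filter (fun A => pg A = some p)).card := by rw [hnonefib]; simp
    _ ≤ ∑ p : Fin k, (n - 3 + (if ground ∈ (NC.filter (fun A => pg A = some p)).image θ then 1 else 0)) :=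
        Finset.sum_le_sum (fun p _ => hperpage p)
    _ = k * (n-3) + ∑ p : Fin k, (if ground ∈ (NC.filter (fun A => pg A = some p)).image θ then 1 else 0) := by
        rw [Finset.sum_add_distrib, Finset.sum_const, Finset.card_univ, Fintype.card_fin, smul_eq_mul]
    _ ≤ k * (n-3) + 1 := by omega
  apply arith_lower n k hn4
  omega

section Upper

open scoped Classical
set_option linter.unusedSectionVars false

variable {V : Type*} [Fintype V] [LinearOrder V] (T : SimpleGraph V) (hT : T.IsTree)

noncomputable def rootT : V := hT.isConnected.nonempty.some

noncomputable def pw (x : V) : T.Path (rootT T hT) x :=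
  ((hT.isConnected.preconnected (rootT T hT) x).some).toPath

noncomputable def pl (x : V) : List V := (pw T hT x).1.support

variable {T}

lemma path_unique (hT : T.IsTree) {x : V} (p : T.Path (rootT T hT) x) : p = pw T hT x :=
  hT.IsAcyclic.path_unique p _

lemma pl_getLast (x : V) : (pl T hT x).getLast? = some x := by
  rw [pl, List.getLast?_eq_getLast (SimpleGraph.Walk.support_ne_nil _),
    SimpleGraph.Walk.getLast_support]

lemma pl_ne_nil (x : V) : pl T hT x ≠ [] := SimpleGraph.Walk.support_ne_nil _

lemma pl_nodup (x : V) : (pl T hT x).Nodup := (pw T hT x).2.support_nodup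

lemma pl_head (x : V) : (pl T hT x).head? = some (rootT T hT) := by
  rw [pl, List.head?_eq_head (SimpleGraph.Walk.support_ne_nil _),
    SimpleGraph.Walk.head_support]

lemma pl_mem_self (x : V) : x ∈ pl T hT x := SimpleGraph.Walk.end_mem_support _

lemma pl_inj : Function.Injective (pl T hT) := by
  intro x y h
  have h1 := pl_getLast hT x
  have h2 := pl_getLast hT y
  rw [h] at h1
  rw [h1] at h2
  exact Option.some_inj.mp h2

lemma pl_root : pl T hT (rootT T hT) = [rootT T hT] := by
  have : (SimpleGraph.Path.nil : T.Path (rootT T hT) (rootT T hT)) = pw T hT _ :=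
    path_unique hT _
  rw [pl, ← this]
  rfl

lemma pl_prefix_of_mem {x y : V} (h : y ∈ (pw T hT x).1.support) :
    pl T hT y <+: pl T hT x := by
  set p := (pw T hT x).1 with hp
  have htp : (p.takeUntil y h).IsPath := (pw T hT x).2.takeUntil h
  have : pl T hT y = (p.takeUntil y h).support := by
    rw [pl, ← path_unique hT ⟨p.takeUntil y h, htp⟩]
  rw [this]
  have hspec := p.take_spec h
  refine ⟨((p.dropUntil y h).support).tail, ?_⟩
  rw [← SimpleGraph.Walk.support_append, hspec]
  rfl

lemma mem_of_pl_prefix {x y : V} (h : pl T hT y <+: pl T hT x) :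
    y ∈ (pw T hT x).1.support := by
  have : y ∈ pl T hT y := pl_mem_self hT y
  exact h.subset this

lemma adj_dichotomy {u w : V} (h : T.Adj u w) :
    pl T hT w = pl T hT u ++ [w] ∨ pl T hT u = pl T hT w ++ [u] := by
  by_cases hw : w ∈ (pw T hT u).1.support
  · right
    set p := (pw T hT u).1 with hp
    have hdrop : (p.dropUntil w hw).IsPath := (pw T hT u).2.dropUntil hw
    have hsingle : (⟨p.dropUntil w hw, hdrop⟩ : T.Path w u) =
        SimpleGraph.Path.singleton h.symm :=
      hT.IsAcyclic.path_unique _ _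
    have hsupp : (p.dropUntil w hw).support = [w, u] := by
      have := congrArg (fun q : T.Path w u => q.1.support) hsingle
      simpa [SimpleGraph.Path.singleton] using this
    have htake : pl T hT w = (p.takeUntil w hw).support := by
      rw [pl, ← path_unique hT ⟨p.takeUntil w hw, (pw T hT u).2.takeUntil hw⟩]
    have hspec := p.take_spec hw
    have : p.support = (p.takeUntil w hw).support ++ ((p.dropUntil w hw).support).tail := by
      rw [← SimpleGraph.Walk.support_append, hspec]
    rw [pl, this, ← htake, hsupp]
    rfl
  · left
    have hpath : ((pw T hT u).1.concat h).IsPath := by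
      rw [← SimpleGraph.Walk.isPath_reverse_iff, SimpleGraph.Walk.reverse_concat,
        SimpleGraph.Walk.cons_isPath_iff, SimpleGraph.Walk.isPath_reverse_iff]
      refine ⟨(pw T hT u).2, ?_⟩
      rw [SimpleGraph.Walk.support_reverse, List.mem_reverse]
      exact hw
    have : pl T hT w = ((pw T hT u).1.concat h).support := by
      rw [pl, ← path_unique hT ⟨(pw T hT u).1.concat h, hpath⟩]
    rw [this, SimpleGraph.Walk.support_concat, pl]

end Upper

section Upper2

open scoped Classical
set_option linter.unusedSectionVars false

variable {V : Type*} [Fintype V] [LinearOrder V] (T : SimpleGraph V) (hT : T.IsTree)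

noncomputable def pre (x : V) : ℕ :=
  (Finset.univ.filter (fun y => List.Lex (· < ·) (pl T hT y) (pl T hT x))).card

variable {T}

lemma lex_trans' {a b c : List V} (h1 : List.Lex (· < ·) a b) (h2 : List.Lex (· < ·) b c) :
    List.Lex (· < ·) a c := List.lt_trans h1 h2

lemma lex_irrefl' (a : List V) : ¬ List.Lex (· < ·) a a := irrefl a

lemma lex_trichotomy' (a b : List V) :
    List.Lex (· < ·) a b ∨ a = b ∨ List.Lex (· < ·) b a := trichotomous a b

lemma pre_mono {x y : V} (h : List.Lex (· < ·) (pl T hT y) (pl T hT x)) :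
    pre T hT y < pre T hT x := by
  apply Finset.card_lt_card
  constructor
  · intro z hz
    rw [Finset.mem_filter] at hz ⊢
    exact ⟨hz.1, lex_trans' hz.2 h⟩
  · intro hsub
    have hy : y ∈ Finset.univ.filter (fun z => List.Lex (· < ·) (pl T hT z) (pl T hT x)) := by
      rw [Finset.mem_filter]; exact ⟨Finset.mem_univ _, h⟩
    have := hsub hy
    rw [Finset.mem_filter] at this
    exact lex_irrefl' _ this.2

lemma pre_lt_iff {x y : V} : pre T hT y < pre T hT x ↔ List.Lex (· < ·) (pl T hT y) (pl T hT x) := by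
  constructor
  · intro h
    rcases lex_trichotomy' (pl T hT y) (pl T hT x) with h' | h' | h'
    · exact h'
    · rw [pl_inj hT h'] at h; omega
    · exact absurd (pre_mono hT h') (by omega)
  · exact pre_mono hT

lemma pre_inj {x y : V} (h : pre T hT x = pre T hT y) : x = y := by
  rcases lex_trichotomy' (pl T hT x) (pl T hT y) with h' | h' | h'
  · have := pre_mono hT h'; omega
  · exact pl_inj hT h'
  · have := pre_mono hT h'; omega

lemma pre_surj_le {c : V} (t : ℕ) (h : t ≤ pre T hT c) : ∃ b, pre T hT b = t := by
  set W := Finset.univ.filter (fun y => t ≤ pre T hT y) with hW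
  have hcW : c ∈ W := by rw [hW, Finset.mem_filter]; exact ⟨Finset.mem_univ _, h⟩
  obtain ⟨b, hbW, hbmin⟩ := W.exists_min_image (pre T hT) ⟨c, hcW⟩
  rw [hW, Finset.mem_filter] at hbW
  refine ⟨b, le_antisymm ?_ hbW.2⟩
  have hsub : Finset.univ.filter (fun y => List.Lex (· < ·) (pl T hT y) (pl T hT b)) ⊆
      Finset.univ.filter (fun y => pre T hT y < t) := by
    intro y hy
    rw [Finset.mem_filter] at hy ⊢
    refine ⟨Finset.mem_univ _, ?_⟩
    by_contra hc
    have hyW : y ∈ W := by rw [hW, Finset.mem_filter]; exact ⟨Finset.mem_univ _, by omega⟩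
    have := hbmin y hyW
    have := pre_mono hT hy.2
    omega
  calc pre T hT b ≤ (Finset.univ.filter (fun y => pre T hT y < t)).card :=
        Finset.card_le_card hsub
  _ ≤ (Finset.range t).card := by
      apply Finset.card_le_card_of_injOn (pre T hT)
      · intro y hy
        rw [Finset.mem_coe, Finset.mem_filter] at hy
        rw [Finset.mem_coe, Finset.mem_range]
        exact hy.2
      · intro y _ z _ hyz
        exact pre_inj hT hyz
  _ = t := Finset.card_range t

lemma pl_cons (x : V) : ∃ l, pl T hT x = rootT T hT :: l := by
  have h1 := pl_head hT x
  cases hpl : pl T hT x with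
  | nil => exact absurd hpl (pl_ne_nil hT x)
  | cons a l =>
    rw [hpl] at h1
    simp at h1
    exact ⟨l, by rw [h1]⟩

lemma pre_root : pre T hT (rootT T hT) = 0 := by
  rw [pre, Finset.card_eq_zero, Finset.filter_eq_empty_iff]
  intro y _
  rw [pl_root]
  obtain ⟨l, hl⟩ := pl_cons hT y
  rw [hl]
  intro hlex
  cases hlex with
  | cons h => cases h
  | rel h => exact lt_irrefl _ h

lemma prefix_pre_le {v x : V} (h : pl T hT v <+: pl T hT x) : pre T hT v ≤ pre T hT x := by
  rcases lex_of_prefix h with h' | h'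
  · rw [pl_inj hT h']
  · exact le_of_lt (pre_mono hT h')

variable (T) in
noncomputable def subF (v : V) : Finset V :=
  Finset.univ.filter (fun x => pl T hT v <+: pl T hT x)

variable (T) in
noncomputable def sz (v : V) : ℕ := (subF T hT v).card

lemma mem_subF {v x : V} : x ∈ subF T hT v ↔ pl T hT v <+: pl T hT x := by
  rw [subF, Finset.mem_filter]
  simp

lemma self_mem_subF (v : V) : v ∈ subF T hT v := (mem_subF hT).mpr (List.prefix_refl _)

lemma image_pre_subF (v : V) :
    (subF T hT v).image (pre T hT) = Finset.Ico (pre T hT v) (pre T hT v + sz T hT v) := by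
  have hne : ((subF T hT v).image (pre T hT)).Nonempty :=
    ⟨pre T hT v, Finset.mem_image_of_mem _ (self_mem_subF hT v)⟩
  have hconv : ∀ a ∈ (subF T hT v).image (pre T hT), ∀ c ∈ (subF T hT v).image (pre T hT),
      ∀ b, a ≤ b → b ≤ c → b ∈ (subF T hT v).image (pre T hT) := by
    intro a ha c hc b hab hbc
    obtain ⟨xa, hxa, rfl⟩ := Finset.mem_image.mp ha
    obtain ⟨xc, hxc, rfl⟩ := Finset.mem_image.mp hc
    obtain ⟨xb, rfl⟩ := pre_surj_le hT b (le_trans hbc (le_refl _))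
    refine Finset.mem_image_of_mem _ ((mem_subF hT).mpr ?_)
    apply prefix_of_lex_between ((mem_subF hT).mp hxa) ((mem_subF hT).mp hxc)
    · rcases eq_or_lt_of_le hab with he | hl
      · exact Or.inl (congrArg (pl T hT) (pre_inj hT he))
      · exact Or.inr ((pre_lt_iff hT).mp hl)
    · rcases eq_or_lt_of_le hbc with he | hl
      · exact Or.inl (congrArg (pl T hT) (pre_inj hT he))
      · exact Or.inr ((pre_lt_iff hT).mp hl)
  have hmin : ((subF T hT v).image (pre T hT)).min' hne = pre T hT v := by
    apply le_antisymm
    · exact Finset.min'_le _ _ (Finset.mem_image_of_mem _ (self_mem_subF hT v))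
    · apply Finset.le_min'
      intro y hy
      obtain ⟨x, hx, rfl⟩ := Finset.mem_image.mp hy
      exact prefix_pre_le hT ((mem_subF hT).mp hx)
  have hcard : ((subF T hT v).image (pre T hT)).card = sz T hT v :=
    Finset.card_image_of_injOn (fun a _ b _ h => pre_inj hT h)
  rw [← hmin, ← hcard]
  exact nat_convex_eq_Ico _ hne hconv

lemma mem_subF_iff_pre {v x : V} :
    x ∈ subF T hT v ↔ pre T hT v ≤ pre T hT x ∧ pre T hT x < pre T hT v + sz T hT v := by
  constructor
  · intro h
    have : pre T hT x ∈ (subF T hT v).image (pre T hT) := Finset.mem_image_of_mem _ h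
    rw [image_pre_subF, Finset.mem_Ico] at this
    exact this
  · intro h
    have : pre T hT x ∈ Finset.Ico (pre T hT v) (pre T hT v + sz T hT v) :=
      Finset.mem_Ico.mpr h
    rw [← image_pre_subF hT] at this
    obtain ⟨y, hy, hyx⟩ := Finset.mem_image.mp this
    rw [pre_inj hT hyx] at hy
    exact hy

variable (T) in
def childR (v w : V) : Prop := pl T hT w = pl T hT v ++ [w]

lemma child_pre {v w : V} (h : childR T hT v w) : pre T hT v < pre T hT w := by
  apply pre_mono
  rw [h]
  exact lex_append_cons _ _ _

lemma child_mem_subF {v w : V} (h : childR T hT v w) : w ∈ subF T hT v :=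
  (mem_subF hT).mpr ⟨[w], h.symm⟩

lemma subF_subset_of_mem {v x : V} (h : x ∈ subF T hT v) : subF T hT x ⊆ subF T hT v := by
  intro y hy
  exact (mem_subF hT).mpr (((mem_subF hT).mp h).trans ((mem_subF hT).mp hy))

lemma parent_unique {u u' w : V} (h : childR T hT u w) (h' : childR T hT u' w) : u = u' := by
  have : pl T hT u ++ [w] = pl T hT u' ++ [w] := by rw [← h, ← h']
  exact pl_inj hT (List.append_inj_left' this rfl)

lemma not_mem_subF_of_child {v w : V} (h : childR T hT v w) : v ∉ subF T hT w := by
  intro hc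
  have := ((mem_subF hT).mp hc).length_le
  rw [h] at this
  simp at this

lemma exists_child {v v' : V} (h : v' ∈ subF T hT v) (hne : v' ≠ v) :
    ∃ w, childR T hT v w ∧ v' ∈ subF T hT w := by
  obtain ⟨t, ht⟩ := (mem_subF hT).mp h
  have htne : t ≠ [] := by
    intro h0
    rw [h0, List.append_nil] at ht
    exact hne (pl_inj hT ht.symm)
  cases t with
  | nil => exact absurd rfl htne
  | cons w t' =>
    have hchain : List.IsChain T.Adj (pl T hT v') := by
      rw [pl]; exact SimpleGraph.Walk.isChain_adj_support _
    have hadj : T.Adj v w := by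
      rw [← ht] at hchain
      rw [List.isChain_append] at hchain
      exact hchain.2.2 v (Option.mem_def.mpr (pl_getLast hT v)) w (Option.mem_def.mpr rfl)
    rcases adj_dichotomy hT hadj with hc | hc
    · refine ⟨w, hc, (mem_subF hT).mpr ⟨t', ?_⟩⟩
      rw [hc, ← ht]
      simp
    · exfalso
      have hnd := pl_nodup hT v'
      rw [← ht, hc] at hnd
      have hdisj := List.disjoint_of_nodup_append hnd
      exact hdisj (List.mem_append_left _ (pl_mem_self hT w)) List.mem_cons_self

lemma sibling_not_mem {v w w' : V} (h : childR T hT v w) (h' : childR T hT v w')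
    (hne : w ≠ w') {x : V} (hx : x ∈ subF T hT w) : x ∉ subF T hT w' := by
  intro hx'
  have h1 := (mem_subF hT).mp hx
  have h2 := (mem_subF hT).mp hx'
  rcases List.prefix_or_prefix_of_prefix h1 h2 with hp | hp
  · have hlen : (pl T hT w).length = (pl T hT w').length := by
      rw [h, h']; simp
    exact hne (pl_inj hT (List.IsPrefix.eq_of_length hp hlen))
  · have hlen : (pl T hT w').length = (pl T hT w).length := by
      rw [h, h']; simp
    exact hne (pl_inj hT (List.IsPrefix.eq_of_length hp hlen)).symm

lemma subF_laminar {v v' x : V} (h : x ∈ subF T hT v) (h' : x ∈ subF T hT v') :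
    v' ∈ subF T hT v ∨ v ∈ subF T hT v' := by
  rcases List.prefix_or_prefix_of_prefix ((mem_subF hT).mp h) ((mem_subF hT).mp h') with hp | hp
  · exact Or.inl ((mem_subF hT).mpr hp)
  · exact Or.inr ((mem_subF hT).mpr hp)

end Upper2

section Upper3

open scoped Classical
set_option linter.unusedSectionVars false

variable {V : Type*} [Fintype V] [LinearOrder V] (T : SimpleGraph V) (hT : T.IsTree)

noncomputable def oth (x : IncidencePair T) : V := Sym2.Mem.other x.2.2

variable {T}

lemma oth_spec (x : IncidencePair T) : s((x : V × Sym2 V).1, oth T x) = (x : V × Sym2 V).2 :=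
  Sym2.other_spec x.2.2

lemma oth_adj (x : IncidencePair T) : T.Adj (x : V × Sym2 V).1 (oth T x) := by
  rw [← SimpleGraph.mem_edgeSet, oth_spec]
  exact x.2.1

variable (T) in
noncomputable def fPos (x : IncidencePair T) : ℕ :=
  if pre T hT (x : V × Sym2 V).1 < pre T hT (oth T x)
    then 2 * pre T hT (oth T x) - 2
    else 2 * pre T hT (x : V × Sym2 V).1 - 1

lemma sz_pos (v : V) : 1 ≤ sz T hT v :=
  Finset.card_pos.mpr ⟨v, self_mem_subF hT v⟩

lemma pos_char (x : IncidencePair T) :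
    (childR T hT (oth T x) (x : V × Sym2 V).1 ∧
      fPos T hT x = 2 * pre T hT (x : V × Sym2 V).1 - 1 ∧
      pre T hT (oth T x) < pre T hT (x : V × Sym2 V).1) ∨
    (childR T hT (x : V × Sym2 V).1 (oth T x) ∧
      fPos T hT x = 2 * pre T hT (oth T x) - 2 ∧
      pre T hT (x : V × Sym2 V).1 < pre T hT (oth T x)) := by
  rcases adj_dichotomy hT (oth_adj x) with hc | hc
  · right
    have hlt := child_pre hT hc
    exact ⟨hc, by rw [fPos, if_pos hlt], hlt⟩
  · left
    have hlt := child_pre hT hc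
    refine ⟨hc, by rw [fPos, if_neg (by omega)], hlt⟩

lemma pos_in_subtree {w : V} {x : IncidencePair T} (hx : (x : V × Sym2 V).1 ∈ subF T hT w) :
    2 * pre T hT w - 1 ≤ fPos T hT x ∧
    fPos T hT x ≤ 2 * pre T hT w + 2 * sz T hT w - 3 := by
  have hmem := (mem_subF_iff_pre hT).mp hx
  have hszw := sz_pos hT w
  rcases pos_char hT x with ⟨hc, hf, hlt⟩ | ⟨hc, hf, hlt⟩
  · omega
  · -- child type
    have hu : oth T x ∈ subF T hT w :=
      subF_subset_of_mem hT hx (child_mem_subF hT hc)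
    have humem := (mem_subF_iff_pre hT).mp hu
    have hne : pre T hT (oth T x) ≠ pre T hT w := by
      intro he
      have : oth T x = w := pre_inj hT he
      rw [this] at hlt
      omega
    omega

lemma pos_avoid {u w : V} (hc : childR T hT u w) {x : IncidencePair T}
    (hx : (x : V × Sym2 V).1 = u) :
    fPos T hT x ≤ 2 * pre T hT w - 2 ∨ 2 * pre T hT w + 2 * sz T hT w - 2 ≤ fPos T hT x := by
  have hpw := child_pre hT hc
  rcases pos_char hT x with ⟨hc', hf, hlt⟩ | ⟨hc', hf, hlt⟩
  · rw [hx] at hf hlt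
    omega
  · rw [hx] at hc'
    by_cases hew : oth T x = w
    · rw [hew] at hf
      omega
    · have : oth T x ∉ subF T hT w :=
        sibling_not_mem hT hc' hc hew (self_mem_subF hT (oth T x))
      rw [mem_subF_iff_pre hT] at this
      push_neg at this
      have hsz := sz_pos hT w
      rcases lt_or_ge (pre T hT (oth T x)) (pre T hT w) with h' | h'
      · omega
      · have := this h'
        omega

variable (T) in
def IsPos (v : V) (t : ℕ) : Prop :=
  ∃ x : IncidencePair T, (x : V × Sym2 V).1 = v ∧ fPos T hT x = t

lemma sep_main {v v' : V} (hne : v ≠ v') {p q t : ℕ}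
    (hp : IsPos T hT v p) (hq : IsPos T hT v q) (ht : IsPos T hT v' t)
    (h1 : p < t) (h2 : t < q) :
    ∀ s, IsPos T hT v' s → p < s ∧ s < q := by
  by_cases hsub : v' ∈ subF T hT v
  · obtain ⟨w, hcw, hv'w⟩ := exists_child hT hsub hne.symm
    have hpw := child_pre hT hcw
    have hszw := sz_pos hT w
    have hin : ∀ s', IsPos T hT v' s' →
        2 * pre T hT w - 2 < s' ∧ s' < 2 * pre T hT w + 2 * sz T hT w - 2 := by
      rintro s' ⟨x, hx1, rfl⟩
      have hxw : (x : V × Sym2 V).1 ∈ subF T hT w := by rw [hx1]; exact hv'w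
      have := pos_in_subtree hT hxw
      omega
    have havoid : ∀ s', IsPos T hT v s' →
        s' ≤ 2 * pre T hT w - 2 ∨ 2 * pre T hT w + 2 * sz T hT w - 2 ≤ s' := by
      rintro s' ⟨x, hx1, rfl⟩
      exact pos_avoid hT hcw hx1
    have hpt := havoid p hp
    have hqt := havoid q hq
    have htt := hin t ht
    intro s hs
    have := hin s hs
    omega
  by_cases hsub' : v ∈ subF T hT v'
  · obtain ⟨w, hcw, hvw⟩ := exists_child hT hsub' hne
    have hpw := child_pre hT hcw
    have hszw := sz_pos hT w
    have hinp : ∀ s', IsPos T hT v s' →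
        2 * pre T hT w - 2 < s' ∧ s' < 2 * pre T hT w + 2 * sz T hT w - 2 := by
      rintro s' ⟨x, hx1, rfl⟩
      have hxw : (x : V × Sym2 V).1 ∈ subF T hT w := by rw [hx1]; exact hvw
      have := pos_in_subtree hT hxw
      omega
    rintro s ⟨x, hx1, rfl⟩
    exfalso
    have hP := hinp p hp
    have hQ := hinp q hq
    obtain ⟨y, hy1, rfl⟩ := ht
    rcases pos_avoid hT hcw hy1 with h | h <;> omega
  · -- disjoint subtrees
    have hd : pre T hT v + sz T hT v ≤ pre T hT v' ∨
        pre T hT v' + sz T hT v' ≤ pre T hT v := by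
      by_contra hcon
      push_neg at hcon
      set m := max (pre T hT v) (pre T hT v') with hm
      have hm1 : m ∈ Finset.Ico (pre T hT v) (pre T hT v + sz T hT v) := by
        rw [Finset.mem_Ico]
        have := sz_pos hT v
        omega
      have hm2 : m ∈ Finset.Ico (pre T hT v') (pre T hT v' + sz T hT v') := by
        rw [Finset.mem_Ico]
        have := sz_pos hT v'
        omega
      rw [← image_pre_subF hT] at hm1 hm2
      obtain ⟨x, hx, hxm⟩ := Finset.mem_image.mp hm1
      obtain ⟨x', hx', hxm'⟩ := Finset.mem_image.mp hm2
      have : x = x' := pre_inj hT (by rw [hxm, hxm'])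
      rw [this] at hx
      rcases subF_laminar hT hx hx' with h | h
      · exact hsub h
      · exact hsub' h
    have hhull : ∀ s', IsPos T hT v s' →
        2 * pre T hT v - 1 ≤ s' ∧ s' ≤ 2 * pre T hT v + 2 * sz T hT v - 3 := by
      rintro s' ⟨x, hx1, rfl⟩
      exact pos_in_subtree hT (by rw [hx1]; exact self_mem_subF hT v)
    have hhull' : ∀ s', IsPos T hT v' s' →
        2 * pre T hT v' - 1 ≤ s' ∧ s' ≤ 2 * pre T hT v' + 2 * sz T hT v' - 3 := by
      rintro s' ⟨x, hx1, rfl⟩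
      exact pos_in_subtree hT (by rw [hx1]; exact self_mem_subF hT v')
    have hP := hhull p hp
    have hQ := hhull q hq
    have hTT := hhull' t ht
    have hv1 := sz_pos hT v
    have hv2 := sz_pos hT v'
    exfalso
    omega

end Upper3

lemma arith_noncross (M a b c d : ℕ) (h1 : a < c) (h2 : c < b) (h3 : b < d) (h4 : d < 2*M)
    (hp : (a+b) % (2*M) / 2 = (c+d) % (2*M) / 2) : False := by
  rcases lt_or_ge (a+b) (2*M) with hA | hA <;> rcases lt_or_ge (c+d) (2*M) with hB | hB
  · rw [Nat.mod_eq_of_lt hA, Nat.mod_eq_of_lt hB] at hp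
    omega
  · rw [Nat.mod_eq_of_lt hA, Nat.mod_eq_sub_mod hB, Nat.mod_eq_of_lt (by omega)] at hp
    omega
  · omega
  · rw [Nat.mod_eq_sub_mod hA, Nat.mod_eq_of_lt (by omega),
      Nat.mod_eq_sub_mod hB, Nat.mod_eq_of_lt (by omega)] at hp
    omega

section Upper4

open scoped Classical
set_option linter.unusedSectionVars false

variable {V : Type*} [Fintype V] [LinearOrder V] (T : SimpleGraph V) [DecidableRel T.Adj]
  (hT : T.IsTree)

variable {T}

lemma pair_eq_of {x y : IncidencePair T} (h1 : (x : V × Sym2 V).1 = (y : V × Sym2 V).1)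
    (h2 : oth T x = oth T y) : x = y := by
  have he : (x : V × Sym2 V).2 = (y : V × Sym2 V).2 := by
    rw [← oth_spec x, ← oth_spec y, h1, h2]
  exact Subtype.ext (Prod.ext h1 he)

lemma fPos_inj : Function.Injective (fPos T hT) := by
  intro x y h
  rcases pos_char hT x with ⟨hcx, hfx, hlx⟩ | ⟨hcx, hfx, hlx⟩ <;>
    rcases pos_char hT y with ⟨hcy, hfy, hly⟩ | ⟨hcy, hfy, hly⟩
  · -- both parent type
    have h11 : (x : V × Sym2 V).1 = (y : V × Sym2 V).1 := pre_inj hT (by omega)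
    rw [h11] at hcx
    exact pair_eq_of h11 (parent_unique hT hcx hcy)
  · omega
  · omega
  · -- both child type
    have hoth : oth T x = oth T y := pre_inj hT (by omega)
    rw [hoth] at hcx
    exact pair_eq_of (parent_unique hT hcx hcy) hoth

lemma clique_card (v : V) :
    (Finset.univ.filter (fun y : IncidencePair T => (y : V × Sym2 V).1 = v)).card
      = T.degree v := by
  rw [← T.card_incidenceFinset_eq_degree]
  apply Finset.card_bij (fun (x : IncidencePair T) _ => (x : V × Sym2 V).2)
  · intro x hx
    rw [Finset.mem_filter] at hx
    rw [SimpleGraph.mem_incidenceFinset]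
    exact ⟨x.2.1, hx.2 ▸ x.2.2⟩
  · intro x hx y hy hxy
    rw [Finset.mem_filter] at hx hy
    exact Subtype.ext (Prod.ext (hx.2.trans hy.2.symm) hxy)
  · intro e he
    rw [SimpleGraph.mem_incidenceFinset] at he
    exact ⟨⟨(v, e), he.1, he.2⟩, by rw [Finset.mem_filter]; exact ⟨Finset.mem_univ _, rfl⟩, rfl⟩

variable (T) in
noncomputable def rk (x : IncidencePair T) : ℕ :=
  (Finset.univ.filter (fun y : IncidencePair T =>
    (y : V × Sym2 V).1 = (x : V × Sym2 V).1 ∧ fPos T hT y < fPos T hT x)).card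

lemma deg_pos (x : IncidencePair T) : 0 < T.degree (x : V × Sym2 V).1 :=
  T.degree_pos_iff_exists_adj _ |>.mpr ⟨oth T x, oth_adj x⟩

lemma rk_lt_deg (x : IncidencePair T) : rk T hT x < T.degree (x : V × Sym2 V).1 := by
  rw [← clique_card ((x : V × Sym2 V).1)]
  apply Finset.card_lt_card
  constructor
  · intro z hz
    rw [Finset.mem_filter] at hz ⊢
    exact ⟨hz.1, hz.2.1⟩
  · intro hsub
    have hx : x ∈ Finset.univ.filter
        (fun y : IncidencePair T => (y : V × Sym2 V).1 = (x : V × Sym2 V).1) := by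
      rw [Finset.mem_filter]; exact ⟨Finset.mem_univ _, rfl⟩
    have := hsub hx
    rw [Finset.mem_filter] at this
    omega

lemma rk_mono {x y : IncidencePair T} (h11 : (x : V × Sym2 V).1 = (y : V × Sym2 V).1)
    (hf : fPos T hT x < fPos T hT y) : rk T hT x < rk T hT y := by
  apply Finset.card_lt_card
  constructor
  · intro z hz
    rw [Finset.mem_filter] at hz ⊢
    exact ⟨hz.1, hz.2.1.trans h11, by omega⟩
  · intro hsub
    have hx : x ∈ Finset.univ.filter (fun z : IncidencePair T =>
        (z : V × Sym2 V).1 = (y : V × Sym2 V).1 ∧ fPos T hT z < fPos T hT y) := by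
      rw [Finset.mem_filter]; exact ⟨Finset.mem_univ _, h11, hf⟩
    have := hsub hx
    rw [Finset.mem_filter] at this
    omega

variable (T) in
noncomputable def gpN (x y : IncidencePair T) : ℕ :=
  if (x : V × Sym2 V).1 = (y : V × Sym2 V).1
    then ((rk T hT x + rk T hT y) % (2 * ((T.degree (x : V × Sym2 V).1 + 1)/2))) / 2
    else 0

lemma gpN_comm (x y : IncidencePair T) : gpN T hT x y = gpN T hT y x := by
  by_cases h : (x : V × Sym2 V).1 = (y : V × Sym2 V).1
  · rw [gpN, gpN, if_pos h, if_pos h.symm, add_comm, h]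
  · rw [gpN, gpN, if_neg h, if_neg (Ne.symm h)]

lemma gpN_lt (hΔ4 : 4 ≤ T.maxDegree) (x y : IncidencePair T) :
    gpN T hT x y < (T.maxDegree + 1) / 2 := by
  rw [gpN]
  by_cases h : (x : V × Sym2 V).1 = (y : V × Sym2 V).1
  · rw [if_pos h]
    set d0 := T.degree (x : V × Sym2 V).1 with hd0
    have hd1 : 0 < d0 := deg_pos x
    have hdΔ : d0 ≤ T.maxDegree := T.degree_le_maxDegree _
    have hmod : (rk T hT x + rk T hT y) % (2 * ((d0 + 1)/2)) < 2 * ((d0+1)/2) :=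
      Nat.mod_lt _ (by omega)
    omega
  · rw [if_neg h]
    omega

lemma connect_consec {x y : IncidencePair T} (hadj : (completeExpansion T).Adj x y)
    (hne : (x : V × Sym2 V).1 ≠ (y : V × Sym2 V).1) :
    fPos T hT y = fPos T hT x + 1 ∨ fPos T hT x = fPos T hT y + 1 := by
  obtain ⟨hxyne, hcase⟩ := (ce_adj T).mp hadj
  have hee : (x : V × Sym2 V).2 = (y : V × Sym2 V).2 := hcase.resolve_left hne
  have hothx : oth T x = (y : V × Sym2 V).1 := by
    have hy2 : (y : V × Sym2 V).1 ∈ (x : V × Sym2 V).2 := hee ▸ y.2.2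
    rw [← oth_spec x, Sym2.mem_iff] at hy2
    rcases hy2 with h | h
    · exact absurd h.symm hne
    · exact h.symm
  have hothy : oth T y = (x : V × Sym2 V).1 := by
    have hx2 : (x : V × Sym2 V).1 ∈ (y : V × Sym2 V).2 := hee ▸ x.2.2
    rw [← oth_spec y, Sym2.mem_iff] at hx2
    rcases hx2 with h | h
    · exact absurd h hne
    · exact h.symm
  have hpre : pre T hT (x : V × Sym2 V).1 ≠ pre T hT (y : V × Sym2 V).1 :=
    fun h => hne (pre_inj hT h)
  rw [fPos, fPos, hothx, hothy]
  rcases lt_or_gt_of_ne hpre with h | h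
  · left
    rw [if_pos h, if_neg (by omega)]
    omega
  · right
    rw [if_neg (by omega), if_pos (by omega)]
    omega

lemma master (hΔ4 : 4 ≤ T.maxDegree) {x y x' y' : IncidencePair T}
    (hxy : (completeExpansion T).Adj x y) (hxy' : (completeExpansion T).Adj x' y')
    (hg : gpN T hT x y = gpN T hT x' y')
    (l1 : fPos T hT x < fPos T hT x') (l2 : fPos T hT x' < fPos T hT y)
    (l3 : fPos T hT y < fPos T hT y') : False := by
  by_cases h2 : (x' : V × Sym2 V).1 = (y' : V × Sym2 V).1
  · by_cases h1 : (x : V × Sym2 V).1 = (y : V × Sym2 V).1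
    · by_cases hvv : (x : V × Sym2 V).1 = (x' : V × Sym2 V).1
      · -- same clique
        have ha : rk T hT x < rk T hT x' := rk_mono hT hvv l1
        have hb : rk T hT x' < rk T hT y := rk_mono hT (hvv.symm.trans h1) l2
        have hc : rk T hT y < rk T hT y' := rk_mono hT (h1.symm.trans (hvv.trans h2)) l3
        have hd : rk T hT y' < T.degree (x : V × Sym2 V).1 := by
          have := rk_lt_deg hT y'
          rwa [← h2, ← hvv] at this
        rw [gpN, gpN, if_pos h1, if_pos h2, ← hvv] at hg
        exact arith_noncross ((T.degree (x : V × Sym2 V).1 + 1)/2) _ _ _ _ ha hb hc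
          (by omega) hg
      · -- different cliques, separation
        have hsep := sep_main hT hvv
          ⟨x, rfl, rfl⟩ ⟨y, h1.symm, rfl⟩ ⟨x', rfl, rfl⟩ l1 l2
        have := hsep (fPos T hT y') ⟨y', h2.symm, rfl⟩
        omega
    · rcases connect_consec hT hxy h1 with h | h <;> omega
  · rcases connect_consec hT hxy' h2 with h | h <;> omega

end Upper4

lemma upper_bound {V : Type*} [Fintype V] [LinearOrder V] (T : SimpleGraph V)
    [DecidableRel T.Adj] (hT : T.IsTree) (hΔ4 : 4 ≤ T.maxDegree) :
    HasBookEmbedding (completeExpansion T) ((T.maxDegree + 1) / 2) := by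
  classical
  refine ⟨fPos T hT, fun E => some (Sym2.lift
    ⟨fun x y => (⟨gpN T hT x y, gpN_lt hT hΔ4 x y⟩ : Fin ((T.maxDegree + 1)/2)),
     fun x y => Fin.ext (gpN_comm hT x y)⟩ E.1), fPos_inj hT, ?_, ?_⟩
  · intro e he
    exact absurd he (by simp)
  · rintro E E' _ hpage ⟨a, b, c, d, hE, hE', l1, l2, l3⟩
    have hadj1 : (completeExpansion T).Adj a b := by
      have hme := E.2
      rw [hE] at hme
      exact ((completeExpansion T).mem_edgeSet).mp hme
    have hadj2 : (completeExpansion T).Adj c d := by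
      have hme := E'.2
      rw [hE'] at hme
      exact ((completeExpansion T).mem_edgeSet).mp hme
    simp only [hE, hE', Sym2.lift_mk, Option.some_inj, Fin.mk.injEq] at hpage
    exact master hT hΔ4 hadj1 hadj2 hpage l1 l2 l3

theorem stmt10 {V : Type*} [Fintype V] (T : SimpleGraph V) [DecidableRel T.Adj]
    (hT : T.IsTree) (hΔ : 4 ≤ T.maxDegree) :
    pageNumber (completeExpansion T) = (T.maxDegree + 1) / 2 := by
  classical
  letI : LinearOrder V := LinearOrder.lift' (Fintype.equivFin V) (Fintype.equivFin V).injective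
  have hub : HasBookEmbedding (completeExpansion T) ((T.maxDegree + 1) / 2) :=
    upper_bound T hT hΔ
  apply le_antisymm
  · exact Nat.sInf_le hub
  · exact le_csInf ⟨_, hub⟩ (fun k hk => lower_bound T hT hΔ k hk)
end
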